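/- arXiv:1707.06482 — 10 statements merged into one kernel-verified Lean document; each statement's English description precedes it below -/
import Mathlib

section
/- Let G be a graph in which no induced subgraph is isomorphic to the complete bipartite graph K_{s,t} (with parts of sizes s and t). Let G_Δ be the spanning subgraph of G whose edges are exactly those edges of G contained in some triangle of G. Then the graph G \ G_Δ obtained by deleting the edges of G_Δ from G contains no subgraph (not necessarily induced) isomorphic to K_{s,t}. -/
/-- `G` contains a (not necessarily induced) copy of the complete bipartite graph `K_{s,t}`. -/
def hasKst {V : Type*} (G : SimpleGraph V) (s t : ℕ) : Prop :=
  ∃ A B : Finset V, Disjoint A B ∧ A.card = s ∧ B.card = t ∧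
    ∀ a ∈ A, ∀ b ∈ B, G.Adj a b

/-- `G` contains an induced copy of `K_{s,t}`. -/
def hasInducedKst {V : Type*} (G : SimpleGraph V) (s t : ℕ) : Prop :=
  ∃ A B : Finset V, Disjoint A B ∧ A.card = s ∧ B.card = t ∧
    (∀ a ∈ A, ∀ b ∈ B, G.Adj a b) ∧
    (∀ a ∈ A, ∀ a' ∈ A, ¬ G.Adj a a') ∧
    (∀ b ∈ B, ∀ b' ∈ B, ¬ G.Adj b b')

/-- `G` contains a cycle of length `m`. -/
def hasCycleLength {V : Type*} (G : SimpleGraph V) (m : ℕ) : Prop :=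
  ∃ (v : V) (w : G.Walk v v), w.IsCycle ∧ w.length = m

/-- Deleting all edges of `G` lying in a triangle from a graph with no induced `K_{s,t}`
yields a `K_{s,t}`-free graph. -/
theorem stmt_0 {V : Type*} [Fintype V] (G : SimpleGraph V) (s t : ℕ)
    (hs : 2 ≤ s) (ht : 2 ≤ t) (hG : ¬ hasInducedKst G s t) :
    ¬ hasKst (G \ SimpleGraph.fromRel
      (fun a b => G.Adj a b ∧ ∃ c, G.Adj a c ∧ G.Adj b c)) s t := by

  rintro ⟨A, B, hAB, hA, hB, hadj⟩
  -- B is nonempty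
  obtain ⟨b0, hb0⟩ := Finset.card_pos.mp (by omega : 0 < B.card)
  obtain ⟨a0, ha0⟩ := Finset.card_pos.mp (by omega : 0 < A.card)
  have hG' : ∀ a ∈ A, ∀ b ∈ B, G.Adj a b := fun a ha b hb => (hadj a ha b hb).1
  apply hG
  refine ⟨A, B, hAB, hA, hB, hG', ?_, ?_⟩
  · intro a ha a' ha' haa'
    have h1 := hadj a ha b0 hb0
    exact h1.2 ⟨h1.1.ne, Or.inl ⟨h1.1, a', haa', (hG' a' ha' b0 hb0).symm⟩⟩
  · intro b hb b' hb' hbb'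
    have h1 := hadj a0 ha0 b hb
    exact h1.2 ⟨h1.1.ne, Or.inl ⟨h1.1, b', (hG' a0 ha0 b' hb'), hbb'⟩⟩
end

section
/- Let k ≥ 2 and let G be a graph containing no cycle of length 5 and no induced copy of K_{2,t} for some t ≥ 2. Then any two non-adjacent vertices u, v of G have at most max(3,t) - 1 common neighbors. -/
set_option maxHeartbeats 1000000 in
theorem stmt_1 {V : Type*} [Fintype V] [DecidableEq V] (G : SimpleGraph V) [DecidableRel G.Adj]
    (t : ℕ) (ht : 2 ≤ t)
    (hC5 : ¬ hasCycleLength G 5) (hind : ¬ hasInducedKst G 2 t)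
    (u v : V) (huv : u ≠ v) (hadj : ¬ G.Adj u v) :
    (G.neighborFinset u ∩ G.neighborFinset v).card ≤ max 3 t - 1 := by
  set S := G.neighborFinset u ∩ G.neighborFinset v with hS
  by_contra h
  push_neg at h
  have hmax : max 3 t ≤ S.card := by omega
  have h3 : 3 ≤ S.card := le_trans (le_max_left 3 t) hmax
  have htS : t ≤ S.card := le_trans (le_max_right 3 t) hmax
  have hmem : ∀ x ∈ S, G.Adj u x ∧ G.Adj v x := by
    intro x hx
    simp only [hS, Finset.mem_inter, SimpleGraph.mem_neighborFinset] at hx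
    exact hx
  by_cases hcase : ∃ a ∈ S, ∃ b ∈ S, G.Adj a b
  · obtain ⟨a, ha, b, hb, hab⟩ := hcase
    have hab' : a ≠ b := hab.ne
    have hc : ∃ c ∈ S, c ≠ a ∧ c ≠ b := by
      by_contra hc
      push_neg at hc
      have : S ⊆ {a, b} := by
        intro x hx
        by_cases hxa : x = a
        · simp [hxa]
        · simp [hc x hx hxa]
      have := Finset.card_le_card this
      have : ({a,b} : Finset V).card ≤ 2 := Finset.card_insert_le _ _ |>.trans (by simp)
      omega
    obtain ⟨c, hc, hca, hcb⟩ := hc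
    have hua := (hmem a ha).1
    have hub := (hmem b hb).1
    have huc := (hmem c hc).1
    have hva := (hmem a ha).2
    have hvb := (hmem b hb).2
    have hvc := (hmem c hc).2
    apply hC5
    refine ⟨u, .cons hua (.cons hab (.cons hvb.symm (.cons hvc (.cons huc.symm .nil)))), ?_, rfl⟩
    rw [SimpleGraph.Walk.isCycle_def]
    refine ⟨?_, by simp, ?_⟩
    · rw [SimpleGraph.Walk.isTrail_def]
      simp only [SimpleGraph.Walk.edges_cons, SimpleGraph.Walk.edges_nil]
      have h1 : u ≠ a := hua.ne
      have h2 : u ≠ b := hub.ne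
      have h3 : u ≠ c := huc.ne
      have h4 : v ≠ a := hva.ne
      have h5 : v ≠ b := hvb.ne
      have h6 : v ≠ c := hvc.ne
      simp [List.Nodup, Sym2.eq_iff]
      tauto
    · simp only [SimpleGraph.Walk.support_cons, SimpleGraph.Walk.support_nil, List.tail_cons]
      have h1 : u ≠ a := hua.ne
      have h2 : u ≠ b := hub.ne
      have h3 : u ≠ c := huc.ne
      have h4 : v ≠ a := hva.ne
      have h5 : v ≠ b := hvb.ne
      have h6 : v ≠ c := hvc.ne
      simp [List.Nodup]
      tauto
  · push_neg at hcase
    obtain ⟨B, hBS, hBcard⟩ := Finset.exists_subset_card_eq htS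
    apply hind
    refine ⟨{u, v}, B, ?_, by simp [huv], hBcard, ?_, ?_, ?_⟩
    · rw [Finset.disjoint_left]
      intro x hx hxB
      have hxS := hBS hxB
      rcases Finset.mem_insert.mp hx with rfl | hx
      · exact (G.irrefl (hmem x hxS).1)
      · rw [Finset.mem_singleton] at hx; subst hx
        exact (G.irrefl (hmem x hxS).2)
    · intro a ha b hb
      rcases Finset.mem_insert.mp ha with rfl | ha
      · exact (hmem b (hBS hb)).1
      · rw [Finset.mem_singleton] at ha; subst ha
        exact (hmem b (hBS hb)).2
    · intro a ha a' ha'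
      simp only [Finset.mem_insert, Finset.mem_singleton] at ha ha'
      rcases ha with rfl | rfl <;> rcases ha' with rfl | rfl
      · exact fun hh => G.irrefl hh
      · exact hadj
      · exact fun hh => hadj hh.symm
      · exact fun hh => G.irrefl hh
    · intro b hb b' hb'
      exact hcase b (hBS hb) b' (hBS hb')
end

section
/- Let G be a graph with no cycle of length 5, and let v be a vertex of G. Then the number of edges of G contained in the neighborhood N(v) is at most |N(v)|, the degree of v. -/
open Classical in
noncomputable def Efin {V : Type*} (G : SimpleGraph V) [Fintype V] [DecidableRel G.Adj]
    (S : Finset V) : Finset (Sym2 V) :=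
  G.edgeFinset.filter (fun e => ∀ x ∈ e, x ∈ S)

open Classical in
lemma Efin_erase {V : Type*} (G : SimpleGraph V) [Fintype V] [DecidableRel G.Adj]
    (S : Finset V) (u : V) :
    (Efin G S).card ≤ (Efin G (S.erase u)).card + (S.filter (fun w => G.Adj u w)).card := by
  classical
  have hsub : Efin G S ⊆ (Efin G (S.erase u)) ∪
      ((S.filter (fun w => G.Adj u w)).image (fun w => s(u, w))) := by
    intro e he
    simp only [Efin, Finset.mem_filter] at he
    obtain ⟨heE, hS⟩ := he
    by_cases hu : u ∈ e
    · refine Finset.mem_union_right _ ?_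
      rw [Finset.mem_image]
      refine ⟨Sym2.Mem.other hu, ?_, Sym2.other_spec hu⟩
      rw [Finset.mem_filter]
      refine ⟨hS _ (Sym2.other_mem hu), ?_⟩
      have := heE
      rw [SimpleGraph.mem_edgeFinset, ← Sym2.other_spec hu, SimpleGraph.mem_edgeSet] at this
      exact this
    · refine Finset.mem_union_left _ ?_
      simp only [Efin, Finset.mem_filter]
      exact ⟨heE, fun x hx => Finset.mem_erase.2 ⟨fun h => hu (h ▸ hx), hS x hx⟩⟩
  calc (Efin G S).card ≤ _ := Finset.card_le_card hsub
    _ ≤ (Efin G (S.erase u)).card +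
        ((S.filter (fun w => G.Adj u w)).image (fun w => s(u, w))).card :=
      Finset.card_union_le _ _
    _ ≤ _ := by gcongr; exact Finset.card_image_le

lemma Efin_card_le {V : Type*} (G : SimpleGraph V) [Fintype V] [DecidableRel G.Adj]
    (S : Finset V)
    (hP4 : ∀ a b c d, a ∈ S → b ∈ S → c ∈ S → d ∈ S → a ≠ c → a ≠ d → b ≠ d →
      G.Adj a b → G.Adj b c → G.Adj c d → False) :
    (Efin G S).card ≤ S.card := by
  classical
  induction S using Finset.strongInduction with
  | _ S IH =>
    by_cases hlow : ∃ u ∈ S, (S.filter (fun w => G.Adj u w)).card ≤ 1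
    · obtain ⟨u, huS, hdeg⟩ := hlow
      have h1 : (Efin G S).card ≤ (Efin G (S.erase u)).card + 1 :=
        le_trans (Efin_erase G S u) (by omega)
      have h2 : (Efin G (S.erase u)).card ≤ (S.erase u).card := by
        refine IH _ (Finset.erase_ssubset huS) ?_
        intro a b c d ha hb hc hd
        exact hP4 a b c d (Finset.mem_of_mem_erase ha) (Finset.mem_of_mem_erase hb)
          (Finset.mem_of_mem_erase hc) (Finset.mem_of_mem_erase hd)
      have h3 : (S.erase u).card = S.card - 1 := Finset.card_erase_of_mem huS
      have h4 : 1 ≤ S.card := Finset.card_pos.2 ⟨u, huS⟩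
      omega
    · push_neg at hlow
      by_cases hS : S = ∅
      · subst hS
        have : Efin G ∅ = ∅ := by
          rw [Finset.eq_empty_iff_forall_notMem]
          intro e he
          simp only [Efin, Finset.mem_filter] at he
          induction e with
          | _ x y => exact absurd (he.2 x (by simp)) (by simp)
        simp [this]
      · obtain ⟨a, haS⟩ := Finset.nonempty_iff_ne_empty.2 hS
        have hdega := hlow a haS
        obtain ⟨b, hbmem, c, hcmem, hbc⟩ := Finset.one_lt_card.1 hdega
        rw [Finset.mem_filter] at hbmem hcmem
        obtain ⟨hbS, hab⟩ := hbmem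
        obtain ⟨hcS, hac⟩ := hcmem
        have hdegb := hlow b hbS
        obtain ⟨x, hxmem, y, hymem, hxy⟩ := Finset.one_lt_card.1 hdegb
        rw [Finset.mem_filter] at hxmem hymem
        have hbd : ∃ d, d ∈ S ∧ G.Adj b d ∧ d ≠ a := by
          by_cases hxa : x = a
          · exact ⟨y, hymem.1, hymem.2, fun h => hxy (hxa.trans h.symm)⟩
          · exact ⟨x, hxmem.1, hxmem.2, hxa⟩
        obtain ⟨d, hdS, hbd, hda⟩ := hbd
        have hbc' : G.Adj b c := by
          by_contra hnadj
          have hdc : d ≠ c := fun h => hnadj (h ▸ hbd)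
          exact hP4 c a b d hcS haS hbS hdS hbc.symm hdc.symm hda.symm hac.symm hab hbd
        clear hbd hda hdS hxy hxmem hymem hdegb hdega
        -- triangle a b c with hab : Adj a b, hac : Adj a c, hbc' : Adj b c
        -- neighborhoods
        have hNa : S.filter (fun w => G.Adj a w) ⊆ {b, c} := by
          intro x hx
          rw [Finset.mem_filter] at hx
          obtain ⟨hxS, hax⟩ := hx
          simp only [Finset.mem_insert, Finset.mem_singleton]
          by_contra hxbc
          push_neg at hxbc
          exact hP4 x a b c hxS haS hbS hcS hxbc.1 hxbc.2 (G.ne_of_adj hac)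
            hax.symm hab hbc'
        have hNb : S.filter (fun w => G.Adj b w) ⊆ {a, c} := by
          intro x hx
          rw [Finset.mem_filter] at hx
          obtain ⟨hxS, hbx⟩ := hx
          simp only [Finset.mem_insert, Finset.mem_singleton]
          by_contra hxac
          push_neg at hxac
          exact hP4 x b a c hxS hbS haS hcS hxac.1 hxac.2 (G.ne_of_adj hbc')
            hbx.symm hab.symm hac
        have hNc : S.filter (fun w => G.Adj c w) ⊆ {a, b} := by
          intro x hx
          rw [Finset.mem_filter] at hx
          obtain ⟨hxS, hcx⟩ := hx
          simp only [Finset.mem_insert, Finset.mem_singleton]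
          by_contra hxab
          push_neg at hxab
          exact hP4 x c a b hxS hcS haS hbS hxab.1 hxab.2 hbc.symm
            hcx.symm hac.symm hab
        -- peel off a, b, c
        have hbS1 : b ∈ S.erase a := Finset.mem_erase.2 ⟨(G.ne_of_adj hab).symm, hbS⟩
        have hcS2 : c ∈ (S.erase a).erase b := Finset.mem_erase.2 ⟨(G.ne_of_adj hbc').symm,
          Finset.mem_erase.2 ⟨(G.ne_of_adj hac).symm, hcS⟩⟩
        have st1 : (Efin G S).card ≤ (Efin G (S.erase a)).card + 2 := by
          have h2' : ({b, c} : Finset V).card ≤ 2 :=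
            le_trans (Finset.card_insert_le _ _) (by simp)
          have := (Finset.card_le_card hNa).trans h2'
          have := Efin_erase G S a
          omega
        have st2 : (Efin G (S.erase a)).card ≤ (Efin G ((S.erase a).erase b)).card + 1 := by
          have hsub : (S.erase a).filter (fun w => G.Adj b w) ⊆ {c} := by
            intro x hx
            rw [Finset.mem_filter] at hx
            have := hNb (Finset.mem_filter.2 ⟨Finset.mem_of_mem_erase hx.1, hx.2⟩)
            simp only [Finset.mem_insert, Finset.mem_singleton] at this ⊢
            rcases this with h | h
            · exact absurd (h ▸ hx.1) (by simp)
            · exact h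
          have := (Finset.card_le_card hsub).trans (by simp : ({c} : Finset V).card ≤ 1)
          have := Efin_erase G (S.erase a) b
          omega
        have st3 : (Efin G ((S.erase a).erase b)).card ≤
            (Efin G (((S.erase a).erase b).erase c)).card := by
          have hsub : ((S.erase a).erase b).filter (fun w => G.Adj c w) ⊆ ∅ := by
            intro x hx
            rw [Finset.mem_filter] at hx
            have hx1 := hx.1
            rw [Finset.mem_erase, Finset.mem_erase] at hx1
            have := hNc (Finset.mem_filter.2 ⟨hx1.2.2, hx.2⟩)
            simp only [Finset.mem_insert, Finset.mem_singleton] at this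
            rcases this with h | h
            · exact absurd h hx1.2.1
            · exact absurd h hx1.1
          have h0 : ((S.erase a).erase b).filter (fun w => G.Adj c w) = ∅ :=
            Finset.subset_empty.1 hsub
          have := Efin_erase G ((S.erase a).erase b) c
          rw [h0] at this
          simpa using this
        have hS3sub : ((S.erase a).erase b).erase c ⊂ S := by
          refine Finset.ssubset_of_subset_of_ssubset ?_ (Finset.erase_ssubset haS)
          intro x hx
          exact Finset.mem_of_mem_erase (Finset.mem_of_mem_erase hx)
        have st4 : (Efin G (((S.erase a).erase b).erase c)).card ≤
            (((S.erase a).erase b).erase c).card := by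
          refine IH _ hS3sub ?_
          intro p q r s hp hq hr hs
          have mem : ∀ x, x ∈ ((S.erase a).erase b).erase c → x ∈ S := fun x hx =>
            Finset.mem_of_mem_erase (Finset.mem_of_mem_erase (Finset.mem_of_mem_erase hx))
          exact hP4 p q r s (mem _ hp) (mem _ hq) (mem _ hr) (mem _ hs)
        have hc3 : (((S.erase a).erase b).erase c).card = S.card - 3 := by
          rw [Finset.card_erase_of_mem hcS2, Finset.card_erase_of_mem hbS1,
            Finset.card_erase_of_mem haS]
          omega
        have hge3 : 3 ≤ S.card := by
          have hsub : ({a, b, c} : Finset V) ⊆ S := by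
            intro x hx
            simp only [Finset.mem_insert, Finset.mem_singleton] at hx
            rcases hx with h | h | h <;> subst h <;> assumption
          have h := Finset.card_le_card hsub
          rw [Finset.card_insert_of_notMem (by simp [G.ne_of_adj hab, G.ne_of_adj hac]),
            Finset.card_insert_of_notMem (by simp [hbc]), Finset.card_singleton] at h
          exact h
        omega

lemma five_cycle {V : Type*} (G : SimpleGraph V) (v a b c d : V)
    (hva : G.Adj v a) (hvb : G.Adj v b) (hvc : G.Adj v c) (hvd : G.Adj v d)
    (hac : a ≠ c) (had : a ≠ d) (hbd : b ≠ d)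
    (hab : G.Adj a b) (hbc : G.Adj b c) (hcd : G.Adj c d) :
    ∃ (u : V) (w : G.Walk u u), w.IsCycle ∧ w.length = 5 := by
  refine ⟨v, SimpleGraph.Walk.cons hva (SimpleGraph.Walk.cons hab
    (SimpleGraph.Walk.cons hbc (SimpleGraph.Walk.cons hcd
    (SimpleGraph.Walk.cons hvd.symm SimpleGraph.Walk.nil)))), ?_, rfl⟩
  have h1 := hva.ne
  have h2 := hvb.ne
  have h3 := hvc.ne
  have h4 := hvd.ne
  have h5 := hab.ne
  have h6 := hbc.ne
  have h7 := hcd.ne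
  rw [SimpleGraph.Walk.isCycle_def, SimpleGraph.Walk.isTrail_def]
  refine ⟨?_, by simp, ?_⟩
  · simp [Sym2.eq, Sym2.rel_iff', List.Nodup]
    aesop
  · simp [List.Nodup]
    aesop

theorem stmt_4 {V : Type*} [Fintype V] (G : SimpleGraph V) [DecidableRel G.Adj]
    (hC5 : ¬ hasCycleLength G 5) (v : V) :
    Nat.card {e : Sym2 V | e ∈ G.edgeSet ∧ ∀ x ∈ e, x ∈ G.neighborSet v} ≤ G.degree v := by
  classical
  have hset : {e : Sym2 V | e ∈ G.edgeSet ∧ ∀ x ∈ e, x ∈ G.neighborSet v}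
      = ↑(Efin G (G.neighborFinset v)) := by
    ext e
    simp [Efin, SimpleGraph.mem_edgeFinset, SimpleGraph.mem_neighborFinset,
      SimpleGraph.mem_neighborSet]
  rw [hset, Nat.card_coe_set_eq, Set.ncard_coe_finset]
  have hP4 : ∀ a b c d, a ∈ G.neighborFinset v → b ∈ G.neighborFinset v →
      c ∈ G.neighborFinset v → d ∈ G.neighborFinset v → a ≠ c → a ≠ d → b ≠ d →
      G.Adj a b → G.Adj b c → G.Adj c d → False := by
    intro a b c d ha hb hc hd hac had hbd hab hbc hcd
    rw [SimpleGraph.mem_neighborFinset] at ha hb hc hd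
    exact hC5 (five_cycle G v a b c d ha hb hc hd hac had hbd hab hbc hcd)
  exact (Efin_card_le G _ hP4).trans_eq rfl
end

section
/- Let G be a triangle-free and K_{2,t}-free graph (t ≥ 2) with minimum degree at least δ, and let u be a vertex of G. Let N_1(u) be the set of neighbors of u and N_2(u) the set of vertices at distance exactly 2 from u. Then (t-1)·|N_2(u)| ≥ (δ - 1)·|N_1(u)|. -/
theorem stmt_5 {V : Type*} [Fintype V] (G : SimpleGraph V) [DecidableRel G.Adj]
    (t δ : ℕ) (ht : 2 ≤ t)
    (htri : G.CliqueFree 3) (hK : ¬ hasKst G 2 t)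
    (hmin : ∀ v, δ ≤ G.degree v) (u : V) :
    (δ - 1) * G.degree u ≤ (t - 1) * Nat.card {w : V | G.dist u w = 2} := by
  classical
  set N1 : Finset V := G.neighborFinset u with hN1
  set N2 : Finset V := Finset.univ.filter (fun w => G.dist u w = 2) with hN2
  have hcard : Nat.card {w : V | G.dist u w = 2} = N2.card := by
    rw [Nat.card_coe_set_eq, Set.ncard_eq_toFinset_card']
    congr 1
    ext w
    simp [hN2]
  have hdeg : G.degree u = N1.card := (G.card_neighborFinset_eq_degree u).symm
  -- Step A
  have stepA : ∀ v ∈ N1, δ - 1 ≤ (N2.filter (fun w => G.Adj v w)).card := by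
    intro v hv
    have huv : G.Adj u v := by simpa [hN1] using hv
    have hsub : (G.neighborFinset v).erase u ⊆ N2.filter (fun w => G.Adj v w) := by
      intro w hw
      rw [Finset.mem_erase, SimpleGraph.mem_neighborFinset] at hw
      obtain ⟨hwu, hvw⟩ := hw
      have hnadj : ¬ G.Adj u w := by
        intro hadj
        exact htri {u, v, w} (SimpleGraph.is3Clique_triple_iff.2 ⟨huv, hadj, hvw⟩)
      have hle : G.dist u w ≤ 2 := by
        have : (SimpleGraph.Walk.cons huv (SimpleGraph.Walk.cons hvw SimpleGraph.Walk.nil)).length = 2 := rfl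
        calc G.dist u w ≤ _ := SimpleGraph.dist_le _
          _ = 2 := this
      have hne0 : G.dist u w ≠ 0 := by
        intro h0
        have hr : G.Reachable u w := ⟨SimpleGraph.Walk.cons huv (SimpleGraph.Walk.cons hvw SimpleGraph.Walk.nil)⟩
        exact hwu ((hr.dist_eq_zero_iff).1 h0).symm
      have hne1 : G.dist u w ≠ 1 := by
        intro h1
        exact hnadj (SimpleGraph.dist_eq_one_iff_adj.1 h1)
      have hdw : G.dist u w = 2 := by omega
      simp [hN2, hdw, hvw]
    have hcard2 : ((G.neighborFinset v).erase u).card = G.degree v - 1 := by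
      rw [Finset.card_erase_of_mem (by simp [huv.symm]), G.card_neighborFinset_eq_degree]
    calc δ - 1 ≤ G.degree v - 1 := Nat.sub_le_sub_right (hmin v) 1
      _ = ((G.neighborFinset v).erase u).card := hcard2.symm
      _ ≤ _ := Finset.card_le_card hsub
  -- Step B
  have stepB : ∀ w ∈ N2, (N1.filter (fun v => G.Adj v w)).card ≤ t - 1 := by
    intro w hw
    have hdw : G.dist u w = 2 := by simpa [hN2] using hw
    by_contra hlt
    push_neg at hlt
    have htle : t ≤ (N1.filter (fun v => G.Adj v w)).card := by omega
    obtain ⟨B, hBsub, hBcard⟩ := Finset.exists_subset_card_eq htle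
    have huw : u ≠ w := by
      intro h; rw [h, SimpleGraph.dist_self] at hdw; exact (by omega : (0:ℕ) ≠ 2) hdw
    apply hK
    refine ⟨{u, w}, B, ?_, ?_, hBcard, ?_⟩
    · rw [Finset.disjoint_left]
      intro a ha hb
      have hb' := hBsub hb
      rw [Finset.mem_filter] at hb'
      obtain ⟨ha1, haw⟩ := hb'
      rw [Finset.mem_insert, Finset.mem_singleton] at ha
      rcases ha with rfl | rfl
      · simp [hN1] at ha1
      · exact G.irrefl haw
    · rw [Finset.card_insert_of_notMem (by simp [huw]), Finset.card_singleton]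
    · intro a ha b hb
      have hb' := hBsub hb
      rw [Finset.mem_filter, hN1, SimpleGraph.mem_neighborFinset] at hb'
      rw [Finset.mem_insert, Finset.mem_singleton] at ha
      rcases ha with rfl | rfl
      · exact hb'.1
      · exact hb'.2.symm
  -- double counting
  have key : ∑ v ∈ N1, (N2.filter (fun w => G.Adj v w)).card
      = ∑ w ∈ N2, (N1.filter (fun v => G.Adj v w)).card := by
    simp_rw [Finset.card_filter]
    exact Finset.sum_comm
  calc (δ - 1) * G.degree u = ∑ _v ∈ N1, (δ - 1) := by
        rw [Finset.sum_const, hdeg, smul_eq_mul, mul_comm]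
    _ ≤ ∑ v ∈ N1, (N2.filter (fun w => G.Adj v w)).card := Finset.sum_le_sum stepA
    _ = ∑ w ∈ N2, (N1.filter (fun v => G.Adj v w)).card := key
    _ ≤ ∑ _w ∈ N2, (t - 1) := Finset.sum_le_sum stepB
    _ = (t - 1) * Nat.card {w : V | G.dist u w = 2} := by
        rw [Finset.sum_const, hcard, smul_eq_mul, mul_comm]
end

section
/- Let G be a graph with n vertices that is triangle-free, K_{2,t}-free (t ≥ 2), has minimum degree at least d/2 where d ≥ 4, and has a vertex u of degree greater than 4d. Then n > 2d²/(t-1). -/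
theorem stmt_7 {V : Type*} [Fintype V] (G : SimpleGraph V) [DecidableRel G.Adj]
    (t : ℕ) (ht : 2 ≤ t) (d : ℝ) (hd : 4 ≤ d)
    (htri : G.CliqueFree 3) (hK : ¬ hasKst G 2 t)
    (hmin : ∀ v, d / 2 ≤ (G.degree v : ℝ))
    (u : V) (hu : 4 * d < (G.degree u : ℝ)) :
    2 * d ^ 2 / ((t : ℝ) - 1) < (Fintype.card V : ℝ) := by
  classical
  set Nu := G.neighborFinset u with hNudef
  set W := (Finset.univ \ insert u Nu) with hWdef
  have huNu : u ∉ Nu := by simp [hNudef]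
  -- fiber bound
  have hfiber : ∀ w ∈ W, (Nu.filter (fun v => G.Adj v w)).card ≤ t - 1 := by
    intro w hw
    by_contra h
    push_neg at h
    have hwu : w ≠ u := by
      simp only [hWdef, Finset.mem_sdiff, Finset.mem_insert] at hw
      tauto
    have hwNu : w ∉ Nu := by
      simp only [hWdef, Finset.mem_sdiff, Finset.mem_insert] at hw
      tauto
    have hle : t ≤ (Nu.filter (fun v => G.Adj v w)).card := by omega
    obtain ⟨B, hBsub, hBcard⟩ := Finset.exists_subset_card_eq hle
    apply hK
    refine ⟨{u, w}, B, ?_, ?_, hBcard, ?_⟩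
    · rw [Finset.disjoint_left]
      intro a ha hb
      have hb' := hBsub hb
      simp only [Finset.mem_filter] at hb'
      simp only [Finset.mem_insert, Finset.mem_singleton] at ha
      rcases ha with rfl | rfl
      · exact huNu hb'.1
      · exact G.loopless.irrefl a hb'.2
    · rw [Finset.card_insert_of_notMem (by simpa using hwu.symm)]
      simp
    · intro a ha b hb
      have hb' := hBsub hb
      simp only [Finset.mem_filter] at hb'
      simp only [Finset.mem_insert, Finset.mem_singleton] at ha
      rcases ha with rfl | rfl
      · exact (SimpleGraph.mem_neighborFinset G a b).mp hb'.1
      · exact hb'.2.symm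
  -- for v ∈ Nu, its W-neighbors are exactly neighbors of v minus u
  have hvW : ∀ v ∈ Nu, W.filter (fun w => G.Adj v w) = G.neighborFinset v \ {u} := by
    intro v hv
    have hv' : G.Adj u v := (SimpleGraph.mem_neighborFinset G u v).mp hv
    ext w
    simp only [Finset.mem_filter, Finset.mem_sdiff, Finset.mem_singleton,
      SimpleGraph.mem_neighborFinset, hWdef, Finset.mem_insert, Finset.mem_univ, true_and]
    constructor
    · rintro ⟨hw1, hw2⟩
      exact ⟨hw2, fun h => hw1 (Or.inl h)⟩
    · rintro ⟨hadj, hne⟩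
      refine ⟨?_, hadj⟩
      rintro (rfl | hwNu)
      · exact hne rfl
      · -- triangle u v w
        have huw : G.Adj u w := (SimpleGraph.mem_neighborFinset G u w).mp hwNu
        exact htri {u, v, w} (SimpleGraph.is3Clique_triple_iff.mpr ⟨hv', huw, hadj⟩)
  -- double counting
  have hcount : ∑ v ∈ Nu, (W.filter (fun w => G.Adj v w)).card
      = ∑ w ∈ W, (Nu.filter (fun v => G.Adj v w)).card := by
    simp only [Finset.card_filter]
    exact Finset.sum_comm
  have hright : ∑ w ∈ W, (Nu.filter (fun v => G.Adj v w)).card ≤ (t - 1) * W.card := by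
    rw [mul_comm]
    calc ∑ w ∈ W, (Nu.filter (fun v => G.Adj v w)).card
        ≤ ∑ _w ∈ W, (t - 1) := Finset.sum_le_sum hfiber
      _ = W.card * (t - 1) := by rw [Finset.sum_const, smul_eq_mul]
  have hleft : ∀ v ∈ Nu, (W.filter (fun w => G.Adj v w)).card = G.degree v - 1 := by
    intro v hv
    rw [hvW v hv]
    rw [Finset.card_sdiff_of_subset (by
      simp only [Finset.singleton_subset_iff, SimpleGraph.mem_neighborFinset]
      exact ((SimpleGraph.mem_neighborFinset G u v).mp hv).symm)]
    rfl
  -- cast to ℝ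
  set n := Fintype.card V
  set m := Nu.card with hm
  have hmn : m + 1 ≤ n := by
    calc m + 1 = (insert u Nu).card := by rw [Finset.card_insert_of_notMem huNu]
    _ ≤ n := Finset.card_le_univ _
  have hWcard : W.card = n - (m + 1) := by
    rw [hWdef, Finset.card_sdiff_of_subset (Finset.subset_univ _),
      Finset.card_insert_of_notMem huNu]
    rfl
  have hdegv : ∀ v ∈ Nu, 1 ≤ G.degree v := by
    intro v hv
    have : u ∈ G.neighborFinset v := by
      simp only [SimpleGraph.mem_neighborFinset]
      exact ((SimpleGraph.mem_neighborFinset G u v).mp hv).symm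
    exact Finset.card_pos.mpr ⟨u, this⟩
  have hS : (m : ℝ) * (d / 2 - 1) ≤ ((∑ v ∈ Nu, (W.filter (fun w => G.Adj v w)).card : ℕ) : ℝ) := by
    push_cast
    calc (m : ℝ) * (d / 2 - 1) = ∑ _v ∈ Nu, (d / 2 - 1) := by
          rw [Finset.sum_const, nsmul_eq_mul]
      _ ≤ ∑ v ∈ Nu, ((W.filter (fun w => G.Adj v w)).card : ℝ) := by
          apply Finset.sum_le_sum
          intro v hv
          rw [hleft v hv]
          have h1 := hdegv v hv
          have h2 := hmin v
          rw [Nat.cast_sub h1]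
          push_cast
          linarith
  have hT : ((∑ w ∈ W, (Nu.filter (fun v => G.Adj v w)).card : ℕ) : ℝ)
      ≤ ((t : ℝ) - 1) * ((n : ℝ) - (m + 1)) := by
    calc ((∑ w ∈ W, (Nu.filter (fun v => G.Adj v w)).card : ℕ) : ℝ)
        ≤ (((t - 1) * W.card : ℕ) : ℝ) := by exact_mod_cast hright
      _ = ((t : ℝ) - 1) * ((n : ℝ) - (m + 1)) := by
          rw [hWcard, Nat.cast_mul, Nat.cast_sub hmn, Nat.cast_sub (by omega : 1 ≤ t)]
          push_cast
          ring
  have hmain : (m : ℝ) * (d / 2 - 1) ≤ ((t : ℝ) - 1) * ((n : ℝ) - (m + 1)) := by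
    calc (m : ℝ) * (d / 2 - 1) ≤ _ := hS
      _ ≤ _ := by rw [hcount]; exact hT
  have hmd : 4 * d < (m : ℝ) := by
    exact hu
  have ht1 : (1 : ℝ) ≤ (t : ℝ) - 1 := by
    have : (2 : ℝ) ≤ t := by exact_mod_cast ht
    linarith
  rw [div_lt_iff₀ (by linarith : (0 : ℝ) < (t : ℝ) - 1)]
  nlinarith [mul_nonneg (by linarith : (0:ℝ) ≤ (m:ℝ) - 4*d) (by linarith : (0:ℝ) ≤ d/2 - 1),
    mul_nonneg (by linarith : (0:ℝ) ≤ (t:ℝ) - 2) (by positivity : (0:ℝ) ≤ (m:ℝ) + 1)]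
end

section
/- Let G be a bipartite graph with parts A and B where |A| + |B| = n, containing no subgraph isomorphic to K_{2,t} with the part of size 2 in one class and the part of size t in the other (t ≥ 2). Then the number of edges of G is at most (1/2)(1 + sqrt(1 + 4(t-1)(n/2 - 1)))·(n/2) + n/2, and in particular at most sqrt(t-1)·(n/2)^{3/2} + n. -/
open Finset

/-- Core counting bound for one side of a bipartite graph with bounded codegrees. -/
lemma stmt8_side_bound {V : Type*} [Fintype V] [DecidableEq V] (G : SimpleGraph V)
    [DecidableRel G.Adj]
    (A B : Finset V) (t : ℕ) (ht : 2 ≤ t) (hdisj : Disjoint A B)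
    (hbip : ∀ u v, G.Adj u v → (u ∈ A ∧ v ∈ B) ∨ (u ∈ B ∧ v ∈ A))
    (hA : ∀ u v, u ∈ A → v ∈ A → u ≠ v →
      Nat.card {w : V | G.Adj u w ∧ G.Adj v w} ≤ t - 1) :
    (G.edgeFinset.card : ℝ) ≤ B.card +
      Real.sqrt (((t:ℝ) - 1) * ((A.card : ℝ) * A.card - A.card) * B.card) := by
  have hnAB : ∀ v, v ∈ A → v ∈ B → False := fun v h1 h2 =>
    (Finset.disjoint_left.1 hdisj) h1 h2
  have hadjA : ∀ u v, G.Adj u v → u ∈ A → v ∈ B := by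
    intro u v h hu
    rcases hbip u v h with ⟨_, hv⟩ | ⟨hu', _⟩
    · exact hv
    · exact absurd hu' (fun h' => hnAB u hu h')
  have hadjB : ∀ u v, G.Adj u v → u ∈ B → v ∈ A := by
    intro u v h hu
    rcases hbip u v h with ⟨hu', _⟩ | ⟨_, hv⟩
    · exact absurd hu (fun h' => hnAB u hu' h')
    · exact hv
  have hdeg : ∀ v : V, G.degree v = (univ.filter (G.Adj v)).card := by
    intro v
    rw [SimpleGraph.degree, SimpleGraph.neighborFinset_eq_filter]
  -- Step 1 : edge count = sum of degrees over B
  have hEdges : G.edgeFinset.card = ∑ b ∈ B, G.degree b := by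
    have hABsum : ∑ a ∈ A, G.degree a = ∑ b ∈ B, G.degree b := by
      have h1 : ∑ a ∈ A, G.degree a = ∑ a ∈ A, ∑ b ∈ B, if G.Adj a b then 1 else 0 := by
        refine Finset.sum_congr rfl fun a ha => ?_
        rw [hdeg, Finset.card_filter]
        refine (Finset.sum_subset (Finset.subset_univ B) ?_).symm
        intro v _ hv
        simp only [ite_eq_right_iff]
        intro hadj
        exact absurd (hadjA a v hadj ha) hv
      have h2 : ∑ b ∈ B, G.degree b = ∑ b ∈ B, ∑ a ∈ A, if G.Adj a b then 1 else 0 := by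
        refine Finset.sum_congr rfl fun b hb => ?_
        rw [hdeg, Finset.card_filter]
        rw [← Finset.sum_subset (Finset.subset_univ A) ?_]
        · exact Finset.sum_congr rfl fun a _ => by simp [G.adj_comm a b]
        · intro v _ hv
          simp only [ite_eq_right_iff]
          intro hadj
          exact absurd (hadjB b v hadj hb) hv
      rw [h1, h2, Finset.sum_comm]
    have hzero : ∀ v ∈ univ, v ∉ A ∪ B → G.degree v = 0 := by
      intro v _ hv
      rw [Finset.mem_union] at hv
      push_neg at hv
      rw [hdeg, Finset.card_eq_zero, Finset.filter_eq_empty_iff]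
      intro w _ hadj
      rcases hbip v w hadj with ⟨h', _⟩ | ⟨h', _⟩
      · exact hv.1 h'
      · exact hv.2 h'
    have htwo : 2 * G.edgeFinset.card = ∑ v ∈ A ∪ B, G.degree v := by
      rw [← G.sum_degrees_eq_twice_card_edges]
      exact (Finset.sum_subset (Finset.subset_univ _) hzero).symm
    rw [Finset.sum_union hdisj, hABsum, ← two_mul] at htwo
    omega
  -- Step 2 : cherry count
  have hCherry : ∑ b ∈ B, (G.degree b * G.degree b - G.degree b)
      ≤ (t - 1) * (A.card * A.card - A.card) := by
    have key : ∑ x ∈ A.offDiag, (B.filter (fun b => G.Adj x.1 b ∧ G.Adj x.2 b)).card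
        = ∑ b ∈ B, (G.degree b * G.degree b - G.degree b) := by
      have lhs : ∀ x : V × V, (B.filter (fun b => G.Adj x.1 b ∧ G.Adj x.2 b)).card
          = ∑ b ∈ B, if G.Adj x.1 b ∧ G.Adj x.2 b then 1 else 0 := by
        intro x; rw [Finset.card_filter]
      have rhs : ∀ b ∈ B, (A.offDiag.filter (fun x : V × V => G.Adj x.1 b ∧ G.Adj x.2 b))
          = (G.neighborFinset b).offDiag := by
        intro b hb
        ext x
        simp only [Finset.mem_filter, Finset.mem_offDiag, SimpleGraph.mem_neighborFinset]
        constructor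
        · rintro ⟨⟨_, _, hne⟩, h1, h2⟩
          exact ⟨h1.symm, h2.symm, hne⟩
        · rintro ⟨h1, h2, hne⟩
          exact ⟨⟨hadjB b x.1 h1 hb, hadjB b x.2 h2 hb, hne⟩, h1.symm, h2.symm⟩
      calc ∑ x ∈ A.offDiag, (B.filter (fun b => G.Adj x.1 b ∧ G.Adj x.2 b)).card
          = ∑ x ∈ A.offDiag, ∑ b ∈ B, (if G.Adj x.1 b ∧ G.Adj x.2 b then 1 else 0) := by
            exact Finset.sum_congr rfl fun x _ => lhs x
        _ = ∑ b ∈ B, ∑ x ∈ A.offDiag, (if G.Adj x.1 b ∧ G.Adj x.2 b then 1 else 0) :=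
            Finset.sum_comm
        _ = ∑ b ∈ B, (A.offDiag.filter (fun x : V × V => G.Adj x.1 b ∧ G.Adj x.2 b)).card := by
            exact Finset.sum_congr rfl fun b _ => (Finset.card_filter _ _).symm
        _ = ∑ b ∈ B, (G.neighborFinset b).offDiag.card := by
            exact Finset.sum_congr rfl fun b hb => by rw [rhs b hb]
        _ = ∑ b ∈ B, (G.degree b * G.degree b - G.degree b) := by
            exact Finset.sum_congr rfl fun b _ => by
              rw [Finset.offDiag_card]; rfl
    rw [← key]
    have bound : ∀ x ∈ A.offDiag,
        (B.filter (fun b => G.Adj x.1 b ∧ G.Adj x.2 b)).card ≤ t - 1 := by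
      intro x hx
      rw [Finset.mem_offDiag] at hx
      refine le_trans ?_ (hA x.1 x.2 hx.1 hx.2.1 hx.2.2)
      have hcard : Nat.card {w : V | G.Adj x.1 w ∧ G.Adj x.2 w}
          = (univ.filter (fun w => G.Adj x.1 w ∧ G.Adj x.2 w)).card := by
        rw [Nat.card_eq_fintype_card, ← Set.toFinset_card]
        congr 1
        ext w
        simp
      rw [hcard]
      exact Finset.card_le_card (Finset.filter_subset_filter _ (Finset.subset_univ B))
    calc ∑ x ∈ A.offDiag, (B.filter (fun b => G.Adj x.1 b ∧ G.Adj x.2 b)).card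
        ≤ ∑ _x ∈ A.offDiag, (t - 1) := Finset.sum_le_sum bound
      _ = A.offDiag.card * (t - 1) := by rw [Finset.sum_const, smul_eq_mul]
      _ = (t - 1) * (A.card * A.card - A.card) := by rw [Finset.offDiag_card, mul_comm]
  -- Step 3 : Cauchy–Schwarz and conclusion
  set s : V → ℕ := fun b => G.degree b - 1 with hs
  have hsdef : ∀ b, s b = G.degree b - 1 := fun _ => rfl
  have ht1 : (1:ℕ) ≤ t := by omega
  have haa : A.card ≤ A.card * A.card := by
    rcases Nat.eq_zero_or_pos A.card with h | h
    · simp [h]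
    · exact Nat.le_mul_of_pos_left _ h
  have hsq : ∀ b, s b * s b ≤ G.degree b * G.degree b - G.degree b := by
    intro b
    rw [hsdef]
    generalize G.degree b = d
    cases d with
    | zero => simp
    | succ n =>
      simpa [Nat.succ_sub_one, Nat.mul_succ] using Nat.mul_le_mul_right n (Nat.le_succ n)
  have hsum2 : (∑ b ∈ B, ((s b : ℝ))^2) ≤ ((t:ℝ) - 1) * ((A.card:ℝ) * A.card - A.card) := by
    have h1 : ∑ b ∈ B, s b * s b ≤ (t - 1) * (A.card * A.card - A.card) :=
      le_trans (Finset.sum_le_sum fun b _ => hsq b) hCherry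
    have h2 := (Nat.cast_le (α := ℝ)).2 h1
    push_cast [Nat.cast_sub ht1, Nat.cast_sub haa] at h2
    calc (∑ b ∈ B, ((s b : ℝ))^2) = ∑ b ∈ B, ((s b : ℝ) * s b) := by
          exact Finset.sum_congr rfl fun b _ => sq (s b : ℝ) ▸ by ring
      _ ≤ _ := h2
  have hnn : (0:ℝ) ≤ ((t:ℝ) - 1) * ((A.card:ℝ) * A.card - A.card) := by
    have h1 : (0:ℝ) ≤ (t:ℝ) - 1 := by
      have : (1:ℝ) ≤ (t:ℝ) := by exact_mod_cast ht1
      linarith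
    have h2 : (0:ℝ) ≤ (A.card:ℝ) * A.card - A.card := by
      have := (Nat.cast_le (α := ℝ)).2 haa
      push_cast at this
      linarith
    exact mul_nonneg h1 h2
  have hcs : (∑ b ∈ B, ((s b : ℝ)))
      ≤ Real.sqrt (B.card) * Real.sqrt (∑ b ∈ B, ((s b : ℝ))^2) := by
    have h := Real.sum_mul_le_sqrt_mul_sqrt B (fun _ => (1:ℝ)) (fun b => (s b : ℝ))
    simpa using h
  have hEe : (G.edgeFinset.card : ℝ) ≤ B.card + ∑ b ∈ B, ((s b : ℝ)) := by
    have h1 : G.edgeFinset.card ≤ B.card + ∑ b ∈ B, s b := by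
      rw [hEdges]
      calc ∑ b ∈ B, G.degree b ≤ ∑ b ∈ B, (1 + s b) := by
            refine Finset.sum_le_sum fun b _ => ?_
            rw [hsdef]; omega
        _ = B.card + ∑ b ∈ B, s b := by rw [Finset.sum_add_distrib]; simp
    exact_mod_cast h1
  have final : Real.sqrt (B.card) * Real.sqrt (∑ b ∈ B, ((s b : ℝ))^2)
      ≤ Real.sqrt (((t:ℝ) - 1) * ((A.card:ℝ) * A.card - A.card) * B.card) := by
    rw [Real.sqrt_mul hnn]
    rw [mul_comm]
    exact mul_le_mul_of_nonneg_right (Real.sqrt_le_sqrt hsum2) (Real.sqrt_nonneg _)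
  calc (G.edgeFinset.card : ℝ) ≤ B.card + ∑ b ∈ B, ((s b : ℝ)) := hEe
    _ ≤ B.card + Real.sqrt (B.card) * Real.sqrt (∑ b ∈ B, ((s b : ℝ))^2) := by linarith
    _ ≤ _ := by linarith

lemma stmt8_endgame1 (a b c n e : ℝ) (hc : 1 ≤ c) (ha1 : 1 ≤ a) (hb1 : 1 ≤ b) (hab : a + b ≤ n)
    (hX : e ≤ b + Real.sqrt (c * (a*a - a) * b))
    (hY : e ≤ a + Real.sqrt (c * (b*b - b) * a)) :
    e ≤ n/2 + Real.sqrt c * (n/2) * Real.sqrt (n/2 - 1) := by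
  have hsplit : ∀ x y : ℝ, 1 ≤ x → 1 ≤ y →
      Real.sqrt (c * (x*x - x) * y) = Real.sqrt c * (Real.sqrt (x*y) * Real.sqrt (x-1)) := by
    intro x y hx hy
    rw [show c * (x*x - x) * y = c * ((x*y) * (x-1)) by ring,
      Real.sqrt_mul (by linarith), Real.sqrt_mul (by positivity)]
  rw [hsplit a b ha1 hb1] at hX
  rw [hsplit b a hb1 ha1, show b * a = a * b from mul_comm b a] at hY
  have h1 : Real.sqrt (a*b) ≤ n/2 := by
    have h : a*b ≤ (n/2)^2 := by
      nlinarith [sq_nonneg (a-b),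
        mul_le_mul hab hab (by linarith : (0:ℝ) ≤ a + b) (by linarith : (0:ℝ) ≤ n)]
    calc Real.sqrt (a*b) ≤ Real.sqrt ((n/2)^2) := Real.sqrt_le_sqrt h
      _ = n/2 := Real.sqrt_sq (by linarith)
  have h2 : Real.sqrt (a-1) + Real.sqrt (b-1) ≤ 2 * Real.sqrt (n/2 - 1) := by
    have hu := Real.sq_sqrt (show (0:ℝ) ≤ a-1 by linarith)
    have hv := Real.sq_sqrt (show (0:ℝ) ≤ b-1 by linarith)
    have hw := Real.sq_sqrt (show (0:ℝ) ≤ n/2-1 by linarith)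
    have huv : (Real.sqrt (a-1) + Real.sqrt (b-1))^2 ≤ (2 * Real.sqrt (n/2-1))^2 := by
      nlinarith [sq_nonneg (Real.sqrt (a-1) - Real.sqrt (b-1))]
    calc Real.sqrt (a-1) + Real.sqrt (b-1)
        = Real.sqrt ((Real.sqrt (a-1) + Real.sqrt (b-1))^2) := (Real.sqrt_sq (by positivity)).symm
      _ ≤ Real.sqrt ((2 * Real.sqrt (n/2-1))^2) := Real.sqrt_le_sqrt huv
      _ = 2 * Real.sqrt (n/2-1) := Real.sqrt_sq (by positivity)
  have key : Real.sqrt (a*b) * (Real.sqrt (a-1) + Real.sqrt (b-1))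
      ≤ (n/2) * (2 * Real.sqrt (n/2-1)) :=
    mul_le_mul h1 h2 (by positivity) (by linarith)
  have key2 := mul_le_mul_of_nonneg_left key (Real.sqrt_nonneg c)
  nlinarith [key2, hX, hY]

lemma stmt8_endgame2 (c n e : ℝ) (hc : 1 ≤ c) (hn : 0 ≤ n)
    (he : e ≤ n/2 + Real.sqrt c * (n/2) * Real.sqrt (n/2 - 1)) :
    e ≤ (1/2) * (1 + Real.sqrt (1 + 4 * c * (n/2 - 1))) * (n/2) + n/2 := by
  have hS : 2 * Real.sqrt c * Real.sqrt (n/2 - 1) ≤ Real.sqrt (1 + 4 * c * (n/2 - 1)) := by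
    have e1 : 2 * Real.sqrt c * Real.sqrt (n/2-1) = Real.sqrt (4 * (c * (n/2-1))) := by
      rw [Real.sqrt_mul (by norm_num : (0:ℝ) ≤ 4), Real.sqrt_mul (by linarith : (0:ℝ) ≤ c),
        show Real.sqrt 4 = 2 by
          rw [show (4:ℝ) = 2^2 by norm_num, Real.sqrt_sq (by norm_num)]]
      ring
    rw [e1]
    exact Real.sqrt_le_sqrt (by linarith)
  nlinarith [Real.sqrt_nonneg (1 + 4 * c * (n/2 - 1)), Real.sqrt_nonneg c,
    Real.sqrt_nonneg (n/2 - 1), hn, hS,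
    mul_le_mul_of_nonneg_left hS (show (0:ℝ) ≤ n/2 by linarith)]

lemma stmt8_endgame3 (c n e : ℝ) (hc : 1 ≤ c) (hn : 2 ≤ n)
    (he : e ≤ n/2 + Real.sqrt c * (n/2) * Real.sqrt (n/2 - 1)) :
    e ≤ Real.sqrt c * (n/2) ^ ((3:ℝ)/2) + n := by
  have hq : (0:ℝ) < n/2 := by linarith
  have hr : (n/2) ^ ((3:ℝ)/2) = (n/2) * Real.sqrt (n/2) := by
    rw [show (3:ℝ)/2 = 1 + 1/2 by norm_num, Real.rpow_add hq, Real.rpow_one,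
      ← Real.sqrt_eq_rpow]
  rw [hr]
  have hmono : Real.sqrt (n/2 - 1) ≤ Real.sqrt (n/2) := Real.sqrt_le_sqrt (by linarith)
  have h2 := mul_le_mul_of_nonneg_left hmono
    (show (0:ℝ) ≤ Real.sqrt c * (n/2) by positivity)
  nlinarith [h2]

theorem stmt_8 {V : Type*} [Fintype V] (G : SimpleGraph V) (A B : Finset V)
    (t : ℕ) (ht : 2 ≤ t)
    (hpart : ∀ v, v ∈ A ∨ v ∈ B) (hdisj : Disjoint A B)
    (hbip : ∀ u v, G.Adj u v → (u ∈ A ∧ v ∈ B) ∨ (u ∈ B ∧ v ∈ A))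
    (hA : ∀ u v, u ∈ A → v ∈ A → u ≠ v →
      Nat.card {w : V | G.Adj u w ∧ G.Adj v w} ≤ t - 1)
    (hB : ∀ u v, u ∈ B → v ∈ B → u ≠ v →
      Nat.card {w : V | G.Adj u w ∧ G.Adj v w} ≤ t - 1) :
    (Nat.card G.edgeSet : ℝ) ≤
      (1 / 2) * (1 + Real.sqrt (1 + 4 * ((t : ℝ) - 1) * ((Fintype.card V : ℝ) / 2 - 1))) *
        ((Fintype.card V : ℝ) / 2) + (Fintype.card V : ℝ) / 2 ∧
    (Nat.card G.edgeSet : ℝ) ≤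
      Real.sqrt ((t : ℝ) - 1) * ((Fintype.card V : ℝ) / 2) ^ ((3 : ℝ) / 2) +
        (Fintype.card V : ℝ) := by
  classical
  have hc : (1:ℝ) ≤ (t:ℝ) - 1 := by
    have : (2:ℝ) ≤ (t:ℝ) := by exact_mod_cast ht
    linarith
  have hecast : (Nat.card G.edgeSet : ℝ) = (G.edgeFinset.card : ℝ) := by
    rw [Nat.card_eq_fintype_card]
    congr 1
    exact (Set.toFinset_card _).symm
  have hX := stmt8_side_bound G A B t ht hdisj hbip hA
  have hY := stmt8_side_bound G B A t ht hdisj.symm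
    (fun u v h => Or.symm (hbip u v h)) hB
  have hcard : A.card + B.card ≤ Fintype.card V := by
    rw [← Finset.card_union_of_disjoint hdisj]
    exact Finset.card_le_univ _
  have he0 : (0:ℝ) ≤ (Nat.card G.edgeSet : ℝ) := by positivity
  have hn0 : (0:ℝ) ≤ (Fintype.card V : ℝ) := by positivity
  rcases Nat.eq_zero_or_pos A.card with hA0 | hA1
  · -- A empty : no edges
    have hzero : (Nat.card G.edgeSet : ℝ) ≤ 0 := by
      rw [hecast]
      calc (G.edgeFinset.card : ℝ)
          ≤ A.card + Real.sqrt (((t:ℝ)-1) * ((B.card:ℝ) * B.card - B.card) * A.card) := hY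
        _ = 0 := by
            rw [hA0]
            simp
    constructor
    · exact le_trans hzero (by positivity)
    · exact le_trans hzero (by positivity)
  rcases Nat.eq_zero_or_pos B.card with hB0 | hB1
  · have hzero : (Nat.card G.edgeSet : ℝ) ≤ 0 := by
      rw [hecast]
      calc (G.edgeFinset.card : ℝ)
          ≤ B.card + Real.sqrt (((t:ℝ)-1) * ((A.card:ℝ) * A.card - A.card) * B.card) := hX
        _ = 0 := by
            rw [hB0]
            simp
    constructor
    · exact le_trans hzero (by positivity)
    · exact le_trans hzero (by positivity)
  -- main case
  have ha1 : (1:ℝ) ≤ (A.card : ℝ) := by exact_mod_cast hA1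
  have hb1 : (1:ℝ) ≤ (B.card : ℝ) := by exact_mod_cast hB1
  have hab : (A.card : ℝ) + (B.card : ℝ) ≤ (Fintype.card V : ℝ) := by exact_mod_cast hcard
  have hXe : (Nat.card G.edgeSet : ℝ) ≤ (B.card : ℝ) +
      Real.sqrt (((t:ℝ)-1) * ((A.card:ℝ) * A.card - A.card) * B.card) := by
    rw [hecast]; exact hX
  have hYe : (Nat.card G.edgeSet : ℝ) ≤ (A.card : ℝ) +
      Real.sqrt (((t:ℝ)-1) * ((B.card:ℝ) * B.card - B.card) * A.card) := by
    rw [hecast]; exact hY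
  have hmid := stmt8_endgame1 (A.card : ℝ) (B.card : ℝ) ((t:ℝ)-1) (Fintype.card V : ℝ)
    (Nat.card G.edgeSet : ℝ) hc ha1 hb1 hab hXe hYe
  have hn2 : (2:ℝ) ≤ (Fintype.card V : ℝ) := by linarith
  constructor
  · have h := stmt8_endgame2 ((t:ℝ)-1) (Fintype.card V : ℝ) (Nat.card G.edgeSet : ℝ)
      hc hn0 hmid
    calc (Nat.card G.edgeSet : ℝ) ≤ _ := h
      _ = (1 / 2) * (1 + Real.sqrt (1 + 4 * ((t : ℝ) - 1) * ((Fintype.card V : ℝ) / 2 - 1))) *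
        ((Fintype.card V : ℝ) / 2) + (Fintype.card V : ℝ) / 2 := by ring_nf
  · exact stmt8_endgame3 ((t:ℝ)-1) (Fintype.card V : ℝ) (Nat.card G.edgeSet : ℝ) hc hn2 hmid
end

section
/- Let G be a graph with no cycle of length 2k+1 (k ≥ 2), and let v be a vertex of G. Suppose the edges induced by N_2(v) (the set of vertices at distance exactly 2 from v) are 2-colored so that a subgraph B consists of edges whose endpoints lie in distinct sets S'_q, S'_{q'} of a partition of N_2(v) indexed by neighbors q of v, where each vertex of S'_q is adjacent to q, and the edges of B are properly non-monochromatic under a red/blue coloring of the parts. Then B contains no path with 2k-2 vertices (path of length 2k-3). -/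
theorem stmt_9 {V : Type*} [Fintype V] (G : SimpleGraph V) (k : ℕ) (hk : 2 ≤ k)
    (hC : ¬ hasCycleLength G (2 * k + 1)) (v : V)
    (f : V → V) (hf : ∀ w, G.dist v w = 2 → G.Adj v (f w) ∧ G.Adj (f w) w)
    (col : V → Bool) :
    ¬ ∃ (x y : V)
        (p : (SimpleGraph.fromRel (fun a b =>
          G.Adj a b ∧ G.dist v a = 2 ∧ G.dist v b = 2 ∧ col (f a) ≠ col (f b))).Walk x y),
        p.IsPath ∧ p.length = 2 * k - 3 := by
  set B := SimpleGraph.fromRel (fun a b =>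
      G.Adj a b ∧ G.dist v a = 2 ∧ G.dist v b = 2 ∧ col (f a) ≠ col (f b)) with hB
  have hBadj : ∀ {a b : V}, B.Adj a b →
      G.Adj a b ∧ G.dist v a = 2 ∧ G.dist v b = 2 ∧ col (f a) ≠ col (f b) := by
    rintro a b ⟨hne, h | h⟩
    · exact h
    · exact ⟨h.1.symm, h.2.2.1, h.2.1, h.2.2.2.symm⟩
  -- all support vertices of a walk in B are at distance 2, except maybe the first
  have hsup : ∀ {a b : V} (w : B.Walk a b) (u : V), u ∈ w.support →
      u = a ∨ G.dist v u = 2 := by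
    intro a b w
    induction w with
    | nil => intro u hu; left; simpa using hu
    | cons h q ih =>
      intro u hu
      rw [SimpleGraph.Walk.support_cons, List.mem_cons] at hu
      rcases hu with rfl | hu
      · left; rfl
      · rcases ih u hu with rfl | h2
        · exact Or.inr (hBadj h).2.2.1
        · exact Or.inr h2
  have hpar : ∀ {a b : V} (w : B.Walk a b),
      (col (f a) = col (f b)) ↔ Even w.length := by
    intro a b w
    induction w with
    | nil => simp
    | cons h q ih =>
      rename_i a c b
      have h1 := (hBadj h).2.2.2
      rw [SimpleGraph.Walk.length_cons, Nat.even_add_one, ← ih]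
      rcases Bool.eq_false_or_eq_true (col (f a)) with h2 | h2 <;>
        rcases Bool.eq_false_or_eq_true (col (f c)) with h3 | h3 <;>
          simp [h2, h3] at h1 ⊢
  rintro ⟨x, y, p, hp, hlen⟩
  have hklen : 1 ≤ p.length := by rw [hlen]; omega
  -- distances
  have hdist : ∀ u ∈ p.support, G.dist v u = 2 := by
    cases p with
    | nil => simp at hklen
    | cons h q =>
      intro u hu
      rw [SimpleGraph.Walk.support_cons, List.mem_cons] at hu
      rcases hu with rfl | hu
      · exact (hBadj h).2.1
      · rcases hsup q u hu with rfl | h2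
        · exact (hBadj h).2.2.1
        · exact h2
  have hdx : G.dist v x = 2 := hdist x p.start_mem_support
  have hdy : G.dist v y = 2 := hdist y p.end_mem_support
  obtain ⟨hvfx, hfxx⟩ := hf x hdx
  obtain ⟨hvfy, hfyy⟩ := hf y hdy
  -- colors differ at endpoints since length is odd
  have hodd : ¬ Even p.length := by
    rw [hlen, Nat.not_even_iff]; omega
  have hcol : col (f x) ≠ col (f y) := fun h => hodd ((hpar p).mp h)
  have hfxy : f x ≠ f y := fun h => hcol (by rw [h])
  -- transfer walk to G
  have hle : B ≤ G := fun a b h => (hBadj h).1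
  have hedges : ∀ e ∈ p.edges, e ∈ G.edgeSet := fun e he =>
    SimpleGraph.edgeSet_mono hle (p.edges_subset_edgeSet he)
  set p' : G.Walk x y := p.transfer G hedges with hp'
  have hsup' : p'.support = p.support := p.support_transfer hedges
  have hlen' : p'.length = p.length := p.length_transfer hedges
  -- basic non-membership facts
  have hvmem : v ∉ p.support := fun h => by
    have := hdist v h; rw [SimpleGraph.dist_self] at this; exact absurd this (by norm_num)
  have hfxd : G.dist v (f x) ≤ 1 := by
    simpa using SimpleGraph.dist_le (SimpleGraph.Walk.cons hvfx SimpleGraph.Walk.nil)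
  have hfyd : G.dist v (f y) ≤ 1 := by
    simpa using SimpleGraph.dist_le (SimpleGraph.Walk.cons hvfy SimpleGraph.Walk.nil)
  have hfxmem : f x ∉ p.support := fun h => by
    have := hdist (f x) h; omega
  have hfymem : f y ∉ p.support := fun h => by
    have := hdist (f y) h; omega
  have hvfx' : v ≠ f x := hvfx.ne
  have hvfy' : v ≠ f y := hvfy.ne
  -- build the cycle
  set q : G.Walk y v :=
    SimpleGraph.Walk.cons hfyy.symm (SimpleGraph.Walk.cons hvfy.symm SimpleGraph.Walk.nil)
    with hq
  set rest : G.Walk (f x) v := SimpleGraph.Walk.cons hfxx (p'.append q) with hrest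
  apply hC
  refine ⟨v, SimpleGraph.Walk.cons hvfx rest, ?_, ?_⟩
  · rw [SimpleGraph.Walk.cons_isCycle_iff]
    constructor
    · rw [SimpleGraph.Walk.isPath_def, hrest, SimpleGraph.Walk.support_cons,
        SimpleGraph.Walk.support_append, hsup', hq]
      simp only [SimpleGraph.Walk.support_cons, SimpleGraph.Walk.support_nil,
        List.tail_cons]
      rw [List.nodup_cons]
      constructor
      · intro hmem
        rw [List.mem_append] at hmem
        rcases hmem with h | h
        · exact hfxmem h
        · simp at h
          rcases h with h | h
          · exact hfxy h
          · exact hvfx' h.symm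
      · rw [List.nodup_append]
        refine ⟨(SimpleGraph.Walk.isPath_def _).mp hp, by simp [hvfy'.symm.symm, hvfy.symm.ne], ?_⟩
        intro u hu w hu2 hEq; subst hEq
        simp at hu2
        rcases hu2 with rfl | rfl
        · exact hfymem hu
        · exact hvmem hu
    · intro hmem
      rw [hrest] at hmem
      simp only [SimpleGraph.Walk.edges_cons, SimpleGraph.Walk.edges_append, hq,
        SimpleGraph.Walk.edges_nil, List.mem_cons, List.mem_append] at hmem
      have hedg := p.edges_transfer hedges
      rcases hmem with h | h | h
      · rw [Sym2.eq_iff] at h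
        rcases h with ⟨h1, h2⟩ | ⟨h1, h2⟩
        · exact hvfx' h1
        · exact hvmem (h1 ▸ p.start_mem_support)
      · rw [hedg] at h
        have := p.fst_mem_support_of_mem_edges h
        exact hvmem this
      · simp only [List.mem_cons, List.not_mem_nil, or_false] at h
        rcases h with h | h <;> rw [Sym2.eq_iff] at h
        · rcases h with ⟨h1, h2⟩ | ⟨h1, h2⟩
          · exact hvmem (h1 ▸ p.end_mem_support)
          · exact hvfy' h1
        · rcases h with ⟨h1, h2⟩ | ⟨h1, h2⟩
          · exact hvfy' h1
          · exact hfxy h2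
  · simp only [SimpleGraph.Walk.length_cons, hrest, SimpleGraph.Walk.length_append, hq,
      SimpleGraph.Walk.length_nil, hlen', hlen]
    omega
end

section
/- Any graph G on n vertices with average degree d contains at least n·d³ walks of length 3, i.e., at least n·d³ sequences v0,v1,v2,v3 of vertices with v0v1, v1v2, v2v3 all edges of G. -/
open Finset

section BRaux


-- pure real analytic key lemma
lemma key_real {ι : Type*} (s : Finset ι) (x y : ι → ℝ) (n W : ℝ)
    (hx : ∀ p ∈ s, 1 ≤ x p) (hy : ∀ p ∈ s, 1 ≤ y p)
    (hA : ∑ p ∈ s, 1 / x p ≤ n) (hB : ∑ p ∈ s, 1 / y p ≤ n)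
    (hW : ∑ p ∈ s, x p * y p = W) :
    (s.card : ℝ) ^ 3 ≤ n ^ 2 * W := by
  set t : ℝ := (s.card : ℝ) with ht
  set R : ℝ := ∑ p ∈ s, Real.sqrt (x p * y p) with hR
  set Q : ℝ := ∑ p ∈ s, 1 / Real.sqrt (x p * y p) with hQ
  have hxy1 : ∀ p ∈ s, 1 ≤ x p * y p := fun p hp => by
    nlinarith [hx p hp, hy p hp]
  have hsq1 : ∀ p ∈ s, 1 ≤ Real.sqrt (x p * y p) := fun p hp => by
    rw [show (1:ℝ) = Real.sqrt 1 by simp]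
    exact Real.sqrt_le_sqrt (hxy1 p hp)
  -- CS1 : t^2 ≤ R * Q
  have cs1 : t ^ 2 ≤ R * Q := by
    have h := Finset.sum_mul_sq_le_sq_mul_sq s
      (fun p => Real.sqrt (Real.sqrt (x p * y p)))
      (fun p => 1 / Real.sqrt (Real.sqrt (x p * y p)))
    have e1 : ∑ p ∈ s, Real.sqrt (Real.sqrt (x p * y p)) *
        (1 / Real.sqrt (Real.sqrt (x p * y p))) = t := by
      rw [ht, Finset.card_eq_sum_ones s]
      push_cast
      refine Finset.sum_congr rfl fun p hp => ?_
      have h1 : (0:ℝ) < Real.sqrt (Real.sqrt (x p * y p)) := by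
        have := hsq1 p hp
        positivity
      field_simp
    have e2 : ∑ p ∈ s, (Real.sqrt (Real.sqrt (x p * y p))) ^ 2 = R := by
      rw [hR]; refine Finset.sum_congr rfl fun p hp => ?_
      exact Real.sq_sqrt (Real.sqrt_nonneg _)
    have e3 : ∑ p ∈ s, (1 / Real.sqrt (Real.sqrt (x p * y p))) ^ 2 = Q := by
      rw [hQ]; refine Finset.sum_congr rfl fun p hp => ?_
      rw [div_pow, one_pow, Real.sq_sqrt (Real.sqrt_nonneg _)]
    rw [e1, e2, e3] at h; exact h
  -- Q ≤ n
  have hQn : Q ≤ n := by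
    have hpt : ∀ p ∈ s, 1 / Real.sqrt (x p * y p) ≤ (1 / x p + 1 / y p) / 2 := by
      intro p hp
      have hx1 := hx p hp; have hy1 := hy p hp
      have hxp : (0:ℝ) < x p := by linarith
      have hyp : (0:ℝ) < y p := by linarith
      have hsx := Real.sq_sqrt hxp.le
      have hsy := Real.sq_sqrt hyp.le
      have hsxn := Real.sqrt_nonneg (x p)
      have hsyn := Real.sqrt_nonneg (y p)
      have hsxpos : 0 < Real.sqrt (x p) := Real.sqrt_pos.2 hxp
      have hsypos : 0 < Real.sqrt (y p) := Real.sqrt_pos.2 hyp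
      have hmul : Real.sqrt (x p * y p) = Real.sqrt (x p) * Real.sqrt (y p) :=
        Real.sqrt_mul hxp.le _
      rw [hmul]
      rw [div_le_div_iff₀ (by positivity) (by norm_num : (0:ℝ) < 2)]
      have amgm : 2 * (Real.sqrt (x p) * Real.sqrt (y p)) ≤ x p + y p := by
        nlinarith [sq_nonneg (Real.sqrt (x p) - Real.sqrt (y p))]
      rw [div_add_div _ _ (ne_of_gt hxp) (ne_of_gt hyp), div_mul_eq_mul_div,
        le_div_iff₀ (by positivity)]
      calc 1 * 2 * (x p * y p) = (Real.sqrt (x p) * Real.sqrt (y p)) *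
            (2 * (Real.sqrt (x p) * Real.sqrt (y p))) := by nlinarith
        _ ≤ (Real.sqrt (x p) * Real.sqrt (y p)) * (x p + y p) := by
            apply mul_le_mul_of_nonneg_left amgm (by positivity)
        _ = (1 * y p + x p * 1) * (Real.sqrt (x p) * Real.sqrt (y p)) := by ring
    calc Q ≤ ∑ p ∈ s, (1 / x p + 1 / y p) / 2 := Finset.sum_le_sum hpt
      _ = ((∑ p ∈ s, 1 / x p) + ∑ p ∈ s, 1 / y p) / 2 := by
          rw [← Finset.sum_add_distrib, Finset.sum_div]
      _ ≤ (n + n) / 2 := by linarith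
      _ = n := by ring
  -- CS2 : R^2 ≤ t * W
  have cs2 : R ^ 2 ≤ t * W := by
    have h := Finset.sum_mul_sq_le_sq_mul_sq s (fun _ => (1:ℝ))
      (fun p => Real.sqrt (x p * y p))
    simp only [one_mul, one_pow] at h
    have e2 : ∑ p ∈ s, (Real.sqrt (x p * y p)) ^ 2 = W := by
      rw [← hW]; refine Finset.sum_congr rfl fun p hp => ?_
      exact Real.sq_sqrt (by linarith [hxy1 p hp])
    rw [e2] at h
    simpa [ht] using h
  -- nonnegativity
  have ht0 : 0 ≤ t := by positivity
  have hR0 : 0 ≤ R := Finset.sum_nonneg fun p _ => Real.sqrt_nonneg _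
  have hQ0 : 0 ≤ Q := Finset.sum_nonneg fun p _ => by positivity
  have hW0 : 0 ≤ W := by
    rw [← hW]; exact Finset.sum_nonneg fun p hp => by nlinarith [hx p hp, hy p hp]
  have hn0 : 0 ≤ n := le_trans hQ0 hQn
  rcases eq_or_lt_of_le ht0 with h0 | htpos
  · rw [← h0]; norm_num; exact mul_nonneg (by positivity) hW0
  · have h4 : t ^ 4 ≤ t * W * n ^ 2 := by
      calc t ^ 4 = (t ^ 2) ^ 2 := by ring
        _ ≤ (R * Q) ^ 2 := by
            apply pow_le_pow_left₀ (by positivity) cs1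
        _ = R ^ 2 * Q ^ 2 := by ring
        _ ≤ (t * W) * n ^ 2 := by
            apply mul_le_mul cs2 (pow_le_pow_left₀ hQ0 hQn 2) (by positivity) (by positivity)
    nlinarith [h4, htpos]



variable {V : Type*} [Fintype V] (G : SimpleGraph V) [DecidableRel G.Adj]

lemma walk_aux (u v : V) :
    ∑ a : V, ∑ b : V, (if G.Adj a u ∧ G.Adj u v ∧ G.Adj v b then (1:ℕ) else 0)
    = if G.Adj u v then G.degree u * G.degree v else 0 := by
  by_cases h : G.Adj u v
  · simp only [h, true_and, if_true]
    have e : ∀ a b : V, (if G.Adj a u ∧ G.Adj v b then (1:ℕ) else 0)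
        = (if G.Adj a u then 1 else 0) * (if G.Adj v b then 1 else 0) := by
      intro a b; by_cases h1 : G.Adj a u <;> by_cases h2 : G.Adj v b <;> simp [h1, h2]
    simp_rw [e, ← Finset.mul_sum, ← Finset.sum_mul]
    congr 1
    · simp_rw [show ∀ a, G.Adj a u ↔ G.Adj u a from fun a => G.adj_comm a u]
      rw [← Finset.card_filter, ← SimpleGraph.neighborFinset_eq_filter]
      rfl
    · rw [← Finset.card_filter, ← SimpleGraph.neighborFinset_eq_filter]
      rfl
  · simp [h]

lemma deg_filter (u : V) : #(univ.filter (fun v => G.Adj u v)) = G.degree u := by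
  rw [← SimpleGraph.neighborFinset_eq_filter]; rfl

lemma E2_card :
    #(univ.filter (fun p : V × V => G.Adj p.1 p.2)) = 2 * #G.edgeFinset := by
  rw [Finset.card_filter, Fintype.sum_prod_type, ← SimpleGraph.sum_degrees_eq_twice_card_edges]
  refine Finset.sum_congr rfl fun u _ => ?_
  rw [← Finset.card_filter, deg_filter]

lemma count_eq :
    Nat.card {q : V × V × V × V |
      G.Adj q.1 q.2.1 ∧ G.Adj q.2.1 q.2.2.1 ∧ G.Adj q.2.2.1 q.2.2.2}
    = ∑ p ∈ univ.filter (fun p : V × V => G.Adj p.1 p.2),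
        G.degree p.1 * G.degree p.2 := by
  rw [Nat.card_eq_fintype_card, ← Set.toFinset_card, Set.toFinset_setOf]
  rw [Finset.card_filter]
  rw [Fintype.sum_prod_type]
  simp_rw [Fintype.sum_prod_type]
  rw [Finset.sum_comm]
  rw [Finset.sum_filter, Fintype.sum_prod_type]
  refine Finset.sum_congr rfl fun u _ => ?_
  rw [Finset.sum_comm]
  refine Finset.sum_congr rfl fun v _ => ?_
  exact walk_aux G u v


variable {V : Type*} [Fintype V] (G : SimpleGraph V) [DecidableRel G.Adj]

lemma deg_filter' (u : V) : #(univ.filter (fun v => G.Adj u v)) = G.degree u := by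
  rw [← SimpleGraph.neighborFinset_eq_filter]; rfl

lemma recA :
    ∑ p ∈ univ.filter (fun p : V × V => G.Adj p.1 p.2), 1 / (G.degree p.1 : ℝ)
      ≤ (Fintype.card V : ℝ) := by
  rw [Finset.sum_filter, Fintype.sum_prod_type]
  calc ∑ u : V, ∑ v : V, (if G.Adj u v then 1 / (G.degree u : ℝ) else 0)
      ≤ ∑ u : V, 1 := by
        refine Finset.sum_le_sum fun u _ => ?_
        rw [← Finset.sum_filter, Finset.sum_const, deg_filter', nsmul_eq_mul]
        rcases Nat.eq_zero_or_pos (G.degree u) with h | h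
        · simp [h]
        · rw [mul_one_div, div_self (by exact_mod_cast h.ne')]
    _ = (Fintype.card V : ℝ) := by simp
  
lemma recB :
    ∑ p ∈ univ.filter (fun p : V × V => G.Adj p.1 p.2), 1 / (G.degree p.2 : ℝ)
      ≤ (Fintype.card V : ℝ) := by
  rw [Finset.sum_filter, Fintype.sum_prod_type, Finset.sum_comm]
  calc ∑ v : V, ∑ u : V, (if G.Adj u v then 1 / (G.degree v : ℝ) else 0)
      ≤ ∑ v : V, 1 := by
        refine Finset.sum_le_sum fun v _ => ?_
        simp_rw [show ∀ u, G.Adj u v ↔ G.Adj v u from fun u => G.adj_comm u v]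
        rw [← Finset.sum_filter, Finset.sum_const, deg_filter', nsmul_eq_mul]
        rcases Nat.eq_zero_or_pos (G.degree v) with h | h
        · simp [h]
        · rw [mul_one_div, div_self (by exact_mod_cast h.ne')]
    _ = (Fintype.card V : ℝ) := by simp
end BRaux

theorem stmt_11 {V : Type*} [Fintype V] (G : SimpleGraph V) [DecidableRel G.Adj]
    (d : ℝ) (hd : d = 2 * (G.edgeFinset.card : ℝ) / (Fintype.card V : ℝ)) :
    (Fintype.card V : ℝ) * d ^ 3 ≤ (Nat.card {q : V × V × V × V |
      G.Adj q.1 q.2.1 ∧ G.Adj q.2.1 q.2.2.1 ∧ G.Adj q.2.2.1 q.2.2.2} : ℝ) := by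
  rw [count_eq G]
  by_cases hn : Fintype.card V = 0
  · rw [hd, hn]
    norm_num
    positivity
  · have hnpos : (0:ℝ) < (Fintype.card V : ℝ) := by
      exact_mod_cast Nat.pos_of_ne_zero hn
    have hdeg1 : ∀ p ∈ univ.filter (fun p : V × V => G.Adj p.1 p.2),
        (1:ℝ) ≤ (G.degree p.1 : ℝ) := by
      intro p hp
      rw [Finset.mem_filter] at hp
      exact_mod_cast (G.degree_pos_iff_exists_adj p.1).2 ⟨p.2, hp.2⟩
    have hdeg2 : ∀ p ∈ univ.filter (fun p : V × V => G.Adj p.1 p.2),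
        (1:ℝ) ≤ (G.degree p.2 : ℝ) := by
      intro p hp
      rw [Finset.mem_filter] at hp
      exact_mod_cast (G.degree_pos_iff_exists_adj p.2).2 ⟨p.1, hp.2.symm⟩
    have hkey := key_real (univ.filter (fun p : V × V => G.Adj p.1 p.2))
      (fun p => (G.degree p.1 : ℝ)) (fun p => (G.degree p.2 : ℝ))
      (Fintype.card V : ℝ)
      (∑ p ∈ univ.filter (fun p : V × V => G.Adj p.1 p.2),
        (G.degree p.1 : ℝ) * (G.degree p.2 : ℝ))
      hdeg1 hdeg2 (recA G) (recB G) rfl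
    rw [E2_card] at hkey
    push_cast at hkey ⊢
    have hEq : (Fintype.card V : ℝ) * d ^ 3
        = (2 * (#G.edgeFinset : ℝ)) ^ 3 / (Fintype.card V : ℝ) ^ 2 := by
      rw [hd]; field_simp
    rw [hEq, div_le_iff₀ (by positivity)]
    nlinarith [hkey]
end

section
/- Let G be a graph with no cycle of length 5 and no induced copy of K_{2,t} (t ≥ 2). Let xy be an edge of G. Call a path v0v1v2v3 (4 distinct vertices, 3 edges) good if v1 and v3 are non-adjacent. Then for any vertex w distinct from x and y, the number of good 3-paths whose first edge is xy (i.e., {v0,v1} = {x,y} as an ordered pair (x,y) or (y,x)) and whose last vertex is w is at most max(3,t) - 1. -/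
open SimpleGraph Finset in
lemma cycle5 {V : Type*} (G : SimpleGraph V) {a b c d e : V}
    (hab : G.Adj a b) (hbc : G.Adj b c) (hcd : G.Adj c d) (hde : G.Adj d e) (hea : G.Adj e a)
    (h1 : a ≠ c) (h2 : a ≠ d) (h3 : b ≠ d) (h4 : b ≠ e) (h5 : c ≠ e) :
    hasCycleLength G 5 := by
  refine ⟨a, .cons hab (.cons hbc (.cons hcd (.cons hde (.cons hea .nil)))), ?_, rfl⟩
  have nab := hab.ne; have nbc := hbc.ne; have ncd := hcd.ne; have nde := hde.ne; have nea := hea.ne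
  simp [Walk.isCycle_def, Walk.isTrail_def, List.Nodup, Sym2.eq_iff]
  aesop

lemma commonNbrs {V : Type*} [Fintype V] [DecidableEq V] (G : SimpleGraph V) [DecidableRel G.Adj]
    (t : ℕ) (ht : 2 ≤ t) (hC5 : ¬ hasCycleLength G 5) (hind : ¬ hasInducedKst G 2 t)
    {y w : V} (hyw : y ≠ w) (hnadj : ¬ G.Adj y w) :
    (Finset.univ.filter (fun u => G.Adj y u ∧ G.Adj w u)).card ≤ max 3 t - 1 := by
  set N := Finset.univ.filter (fun u => G.Adj y u ∧ G.Adj w u) with hN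
  by_contra hcard
  push_neg at hcard
  have hmax : max 3 t ≤ N.card := by omega
  have hmem : ∀ u ∈ N, G.Adj y u ∧ G.Adj w u := by
    intro u hu; simpa [hN] using hu
  by_cases hadj : ∃ u ∈ N, ∃ u' ∈ N, G.Adj u u'
  · obtain ⟨u, hu, u', hu', huu'⟩ := hadj
    have hcard2 : 1 ≤ (N \ {u, u'}).card := by
      have h1 := Finset.le_card_sdiff ({u, u'} : Finset V) N
      have h2 : ({u, u'} : Finset V).card ≤ 2 := Finset.card_insert_le _ _ |>.trans (by simp)
      omega
    obtain ⟨u'', hu''⟩ := Finset.card_pos.mp hcard2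
    simp only [Finset.mem_sdiff, Finset.mem_insert, Finset.mem_singleton] at hu''
    obtain ⟨hu''N, hne⟩ := hu''
    obtain ⟨hyu, hwu⟩ := hmem u hu
    obtain ⟨hyu', hwu'⟩ := hmem u' hu'
    obtain ⟨hyu'', hwu''⟩ := hmem u'' hu''N
    exact hC5 (cycle5 G hyu huu' hwu'.symm hwu'' hyu''.symm
      hyu'.ne hyw (fun h => G.irrefl (h ▸ hwu)) (fun h => hne (Or.inl h.symm)) (fun h => hne (Or.inr h.symm)))
  · push_neg at hadj
    obtain ⟨B, hBN, hBcard⟩ := Finset.exists_subset_card_eq (s := N) (n := t) (by omega)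
    refine hind ⟨{y, w}, B, ?_, ?_, hBcard, ?_, ?_, ?_⟩
    · rw [Finset.disjoint_left]
      intro a ha hB
      have := hmem a (hBN hB)
      simp only [Finset.mem_insert, Finset.mem_singleton] at ha
      rcases ha with rfl | rfl
      · exact G.irrefl this.1
      · exact G.irrefl this.2
    · rw [Finset.card_insert_of_notMem (by simp [hyw]), Finset.card_singleton]
    · intro a ha b hb
      have := hmem b (hBN hb)
      simp only [Finset.mem_insert, Finset.mem_singleton] at ha
      rcases ha with rfl | rfl
      · exact this.1
      · exact this.2
    · intro a ha a' ha'
      simp only [Finset.mem_insert, Finset.mem_singleton] at ha ha'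
      rcases ha with rfl | rfl <;> rcases ha' with rfl | rfl
      · exact G.irrefl
      · exact hnadj
      · exact fun h => hnadj h.symm
      · exact G.irrefl
    · intro b hb b' hb'
      exact hadj b (hBN hb) b' (hBN hb')

lemma pw4 {V : Type*} {a b c d : V} (h1 : a ≠ b) (h2 : a ≠ c) (h3 : a ≠ d)
    (h4 : b ≠ c) (h5 : b ≠ d) (h6 : c ≠ d) :
    ([a, b, c, d] : List V).Pairwise (· ≠ ·) := by
  simp only [List.pairwise_cons, List.mem_cons, List.mem_singleton, List.not_mem_nil,
    List.Pairwise.nil, and_true]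
  refine ⟨?_, ?_, ?_, ?_⟩
  · rintro z (rfl | rfl | rfl | h) <;> first | assumption | exact h.elim
  · rintro z (rfl | rfl | h) <;> first | assumption | exact h.elim
  · rintro z (rfl | h) <;> first | assumption | exact h.elim
  · rintro z h; exact h.elim

theorem stmt_12 {V : Type*} [Fintype V] (G : SimpleGraph V) (t : ℕ) (ht : 2 ≤ t)
    (hC5 : ¬ hasCycleLength G 5) (hind : ¬ hasInducedKst G 2 t)
    (x y : V) (hxy : G.Adj x y) (w : V) (hwx : w ≠ x) (hwy : w ≠ y) :
    Nat.card {q : V × V × V × V |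
      ((q.1 = x ∧ q.2.1 = y) ∨ (q.1 = y ∧ q.2.1 = x)) ∧ q.2.2.2 = w ∧
      [q.1, q.2.1, q.2.2.1, q.2.2.2].Pairwise (· ≠ ·) ∧
      G.Adj q.1 q.2.1 ∧ G.Adj q.2.1 q.2.2.1 ∧ G.Adj q.2.2.1 q.2.2.2 ∧
      ¬ G.Adj q.2.1 q.2.2.2} ≤ max 3 t - 1 := by
  classical
  have hxy' : x ≠ y := hxy.ne
  set Sy : Finset V := Finset.univ.filter
    (fun u => u ≠ x ∧ u ≠ y ∧ u ≠ w ∧ G.Adj y u ∧ G.Adj u w ∧ ¬ G.Adj y w) with hSy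
  set Sx : Finset V := Finset.univ.filter
    (fun u => u ≠ x ∧ u ≠ y ∧ u ≠ w ∧ G.Adj x u ∧ G.Adj u w ∧ ¬ G.Adj x w) with hSx
  have hmemy : ∀ u ∈ Sy, u ≠ x ∧ u ≠ y ∧ u ≠ w ∧ G.Adj y u ∧ G.Adj u w ∧ ¬ G.Adj y w := by
    intro u hu; simpa [hSy] using hu
  have hmemx : ∀ u ∈ Sx, u ≠ x ∧ u ≠ y ∧ u ≠ w ∧ G.Adj x u ∧ G.Adj u w ∧ ¬ G.Adj x w := by
    intro u hu; simpa [hSx] using hu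
  set S : Finset (V × V × V × V) :=
    Sy.image (fun u => (x, y, u, w)) ∪ Sx.image (fun u => (y, x, u, w)) with hS
  have hseteq : {q : V × V × V × V |
      ((q.1 = x ∧ q.2.1 = y) ∨ (q.1 = y ∧ q.2.1 = x)) ∧ q.2.2.2 = w ∧
      [q.1, q.2.1, q.2.2.1, q.2.2.2].Pairwise (· ≠ ·) ∧
      G.Adj q.1 q.2.1 ∧ G.Adj q.2.1 q.2.2.1 ∧ G.Adj q.2.2.1 q.2.2.2 ∧
      ¬ G.Adj q.2.1 q.2.2.2} = ↑S := by
    ext ⟨a, b, c, d⟩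
    simp only [Set.mem_setOf_eq, hS, Finset.coe_union, Finset.coe_image, Set.mem_union,
      Set.mem_image, Finset.mem_coe, hSy, hSx, Finset.mem_filter, Finset.mem_univ, true_and,
      Prod.mk.injEq]
    constructor
    · rintro ⟨hdir, rfl, hpw, h1, h2, h3, h4⟩
      simp only [List.pairwise_cons, List.mem_cons, List.mem_singleton, List.not_mem_nil] at hpw
      obtain ⟨hp1, hp2, hp3, -⟩ := hpw
      rcases hdir with ⟨rfl, rfl⟩ | ⟨rfl, rfl⟩
      · exact Or.inl ⟨c, ⟨(hp1 c (by tauto)).symm, (hp2 c (by tauto)).symm,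
          hp3 d (by tauto), h2, h3, h4⟩, rfl, rfl, rfl, rfl⟩
      · exact Or.inr ⟨c, ⟨(hp2 c (by tauto)).symm, (hp1 c (by tauto)).symm,
          hp3 d (by tauto), h2, h3, h4⟩, rfl, rfl, rfl, rfl⟩
    · rintro (⟨u, ⟨hu1, hu2, hu3, hu4, hu5, hu6⟩, rfl, rfl, rfl, rfl⟩ |
              ⟨u, ⟨hu1, hu2, hu3, hu4, hu5, hu6⟩, rfl, rfl, rfl, rfl⟩)
      · exact ⟨Or.inl ⟨rfl, rfl⟩, rfl,
          pw4 hxy' hu1.symm hwx.symm hu2.symm hwy.symm hu3, hxy, hu4, hu5, hu6⟩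
      · exact ⟨Or.inr ⟨rfl, rfl⟩, rfl,
          pw4 hxy'.symm hu2.symm hwy.symm hu1.symm hwx.symm hu3, hxy.symm, hu4, hu5, hu6⟩
  rw [hseteq, Nat.card_coe_set_eq, Set.ncard_coe_finset]
  have hle : S.card ≤ Sy.card + Sx.card :=
    (Finset.card_union_le _ _).trans (by gcongr <;> exact Finset.card_image_le)
  have hmax3 : 3 ≤ max 3 t := le_max_left _ _
  rcases Finset.eq_empty_or_nonempty Sy with hSyE | ⟨u0, hu0⟩
  · rcases Finset.eq_empty_or_nonempty Sx with hSxE | ⟨u1, hu1⟩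
    · rw [hSyE, hSxE] at hle; simp only [Finset.card_empty] at hle; omega
    · obtain ⟨-, -, -, -, -, hnadj⟩ := hmemx u1 hu1
      have hsub : Sx ⊆ Finset.univ.filter (fun u => G.Adj x u ∧ G.Adj w u) := by
        intro u hu
        obtain ⟨-, -, -, h4, h5, -⟩ := hmemx u hu
        simp [h4, h5.symm]
      have := (Finset.card_le_card hsub).trans
        (commonNbrs G t ht hC5 hind hwx.symm hnadj)
      rw [hSyE] at hle; simp only [Finset.card_empty, Nat.zero_add] at hle; omega
  · rcases Finset.eq_empty_or_nonempty Sx with hSxE | ⟨u1, hu1⟩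
    · obtain ⟨-, -, -, -, -, hnadj⟩ := hmemy u0 hu0
      have hsub : Sy ⊆ Finset.univ.filter (fun u => G.Adj y u ∧ G.Adj w u) := by
        intro u hu
        obtain ⟨-, -, -, h4, h5, -⟩ := hmemy u hu
        simp [h4, h5.symm]
      have := (Finset.card_le_card hsub).trans
        (commonNbrs G t ht hC5 hind hwy.symm hnadj)
      rw [hSxE] at hle; simp only [Finset.card_empty, Nat.add_zero] at hle; omega
    · have key : ∀ u ∈ Sy, ∀ u' ∈ Sx, u = u' := by
        intro u hu u' hu'
        by_contra hne
        obtain ⟨hx1, hy1, hw1, hadj1, hadj1', -⟩ := hmemy u hu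
        obtain ⟨hx2, hy2, hw2, hadj2, hadj2', -⟩ := hmemx u' hu'
        exact hC5 (cycle5 G hxy hadj1 hadj1' hadj2'.symm hadj2.symm
          hx1.symm hwx.symm hwy.symm hy2.symm hne)
      have h1 : Sy.card ≤ 1 := Finset.card_le_one.mpr
        (fun a ha b hb => (key a ha u1 hu1).trans (key b hb u1 hu1).symm)
      have h2 : Sx.card ≤ 1 := Finset.card_le_one.mpr
        (fun a ha b hb => (key u0 hu0 a ha).symm.trans (key u0 hu0 b hb))
      omega
end

section
/- Let G be a graph on n vertices with no cycle of length 5 and no induced copy of K_{2,t} (t ≥ 2), with minimum degree at least d/2 (d ≥ 6), in which some vertex v has degree greater than 6d. Then n > 2d²/(max(3,t)-1). -/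
lemma c5_of {V : Type*} (G : SimpleGraph V) {v x y w z : V}
    (h1 : G.Adj v x) (h2 : G.Adj x y) (h3 : G.Adj y w) (h4 : G.Adj w z) (h5 : G.Adj z v)
    (hvy : v ≠ y) (hvw : v ≠ w) (hxw : x ≠ w) (hxz : x ≠ z) (hyz : y ≠ z) :
    hasCycleLength G 5 := by
  refine ⟨v, .cons h1 (.cons h2 (.cons h3 (.cons h4 (.cons h5 .nil)))), ?_, rfl⟩
  have hvx := h1.ne
  have hxy := h2.ne
  have hyw := h3.ne
  have hwz := h4.ne
  have hzv := h5.ne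
  constructor
  · constructor
    · simp [SimpleGraph.Walk.isTrail_def, List.Nodup, Sym2.eq, Sym2.rel_iff']
      aesop
    · simp
  · simp
    aesop

lemma common_le {V : Type*} [Fintype V] [DecidableEq V] (G : SimpleGraph V) [DecidableRel G.Adj]
    (t : ℕ) (ht : 2 ≤ t)
    (hC5 : ¬ hasCycleLength G 5) (hind : ¬ hasInducedKst G 2 t)
    {v w : V} (hvw : v ≠ w) (hnadj : ¬ G.Adj v w) :
    (G.neighborFinset v ∩ G.neighborFinset w).card ≤ max 3 t - 1 := by
  set S := G.neighborFinset v ∩ G.neighborFinset w with hS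
  by_contra hc
  push_neg at hc
  have hcard : max 3 t ≤ S.card := by omega
  have hmemS : ∀ a ∈ S, G.Adj v a ∧ G.Adj w a := by
    intro a ha
    rw [hS, Finset.mem_inter, SimpleGraph.mem_neighborFinset, SimpleGraph.mem_neighborFinset] at ha
    exact ha
  by_cases hid : ∃ a ∈ S, ∃ b ∈ S, a ≠ b ∧ G.Adj a b
  · obtain ⟨a, ha, b, hb, hab, hadj⟩ := hid
    have h3 : 3 ≤ S.card := le_trans (le_max_left 3 t) hcard
    have h2 : ({a,b} : Finset V).card ≤ 2 := Finset.card_insert_le _ _ |>.trans (by simp)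
    have hnsub : ¬ S ⊆ ({a, b} : Finset V) := fun hsub => by
      have := Finset.card_le_card hsub; omega
    obtain ⟨c, hcS, hcab⟩ := Finset.not_subset.mp hnsub
    simp only [Finset.mem_insert, Finset.mem_singleton, not_or] at hcab
    obtain ⟨hav, haw⟩ := hmemS a ha
    obtain ⟨hbv, hbw⟩ := hmemS b hb
    obtain ⟨hcv, hcw⟩ := hmemS c hcS
    exact hC5 (c5_of G hav hadj hbw.symm hcw hcv.symm
      hbv.ne hvw haw.ne' (fun h => hcab.1 h.symm) (fun h => hcab.2 h.symm))
  · push_neg at hid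
    have hts : t ≤ S.card := le_trans (le_max_right 3 t) hcard
    obtain ⟨B, hBS, hBcard⟩ := Finset.exists_subset_card_eq hts
    refine hind ⟨{v, w}, B, ?_, ?_, hBcard, ?_, ?_, ?_⟩
    · rw [Finset.disjoint_left]
      intro a haA haB
      have := hmemS a (hBS haB)
      rcases Finset.mem_insert.mp haA with rfl | h
      · exact G.irrefl this.1
      · rw [Finset.mem_singleton] at h; subst h; exact G.irrefl this.2
    · rw [Finset.card_insert_of_notMem (by simpa using hvw), Finset.card_singleton]
    · intro a haA b hbB
      have := hmemS b (hBS hbB)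
      rcases Finset.mem_insert.mp haA with rfl | h
      · exact this.1
      · rw [Finset.mem_singleton] at h; subst h; exact this.2
    · intro a haA a' ha'A hadj
      rcases Finset.mem_insert.mp haA with rfl | h <;>
      rcases Finset.mem_insert.mp ha'A with rfl | h'
      · exact G.irrefl hadj
      · rw [Finset.mem_singleton] at h'; subst h'; exact hnadj hadj
      · rw [Finset.mem_singleton] at h; subst h; exact hnadj hadj.symm
      · rw [Finset.mem_singleton] at h h'; subst h; subst h'; exact G.irrefl hadj
    · intro b hbB b' hb'B hadj
      exact hid b (hBS hbB) b' (hBS hb'B) hadj.ne hadj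

lemma p4free_sum {V : Type*} [Fintype V] [DecidableEq V] (G : SimpleGraph V) [DecidableRel G.Adj]
    (N : Finset V)
    (hP4 : ∀ a ∈ N, ∀ b ∈ N, ∀ c ∈ N, ∀ e ∈ N,
      G.Adj a b → G.Adj b c → G.Adj c e → a ≠ c → b ≠ e → a ≠ e → False) :
    ∑ u ∈ N, (N ∩ G.neighborFinset u).card ≤ 2 * N.card := by
  classical
  set f : V → ℕ := fun u => (N ∩ G.neighborFinset u).card with hf
  have key : ∀ u ∈ N, 3 ≤ f u → ∀ x ∈ N ∩ G.neighborFinset u, f x = 1 := by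
    intro u hu hu3 x hx
    rw [Finset.mem_inter, SimpleGraph.mem_neighborFinset] at hx
    obtain ⟨hxN, hux⟩ := hx
    have hu_mem : u ∈ N ∩ G.neighborFinset x := by
      rw [Finset.mem_inter, SimpleGraph.mem_neighborFinset]; exact ⟨hu, hux.symm⟩
    have h1 : 1 ≤ f x := Finset.card_pos.mpr ⟨u, hu_mem⟩
    by_contra hne
    have h2 : 2 ≤ f x := by omega
    have : ¬ (N ∩ G.neighborFinset x) ⊆ {u} := fun hsub => by
      have := Finset.card_le_card hsub; simp only [hf, Finset.card_singleton] at this h2; omega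
    obtain ⟨y, hy, hyu⟩ := Finset.not_subset.mp this
    rw [Finset.mem_singleton] at hyu
    rw [Finset.mem_inter, SimpleGraph.mem_neighborFinset] at hy
    obtain ⟨hyN, hxy⟩ := hy
    have : ¬ (N ∩ G.neighborFinset u) ⊆ {x, y} := fun hsub => by
      have h := Finset.card_le_card hsub
      have h2' : ({x, y} : Finset V).card ≤ 2 := Finset.card_insert_le _ _ |>.trans (by simp)
      simp only [hf] at hu3
      omega
    obtain ⟨z, hz, hzxy⟩ := Finset.not_subset.mp this
    simp only [Finset.mem_insert, Finset.mem_singleton, not_or] at hzxy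
    rw [Finset.mem_inter, SimpleGraph.mem_neighborFinset] at hz
    obtain ⟨hzN, huz⟩ := hz
    exact hP4 y hyN x hxN u hu z hzN hxy.symm hux.symm huz hyu (Ne.symm hzxy.1) (Ne.symm hzxy.2)
  set A := N.filter (fun u => 3 ≤ f u) with hA
  set A' := N.filter (fun u => ¬ 3 ≤ f u) with hA'
  set B := A'.filter (fun u => f u = 1) with hB
  set C := A'.filter (fun u => ¬ f u = 1) with hC
  have hsplit : ∑ u ∈ N, f u = ∑ u ∈ A, f u + ∑ u ∈ A', f u :=
    (Finset.sum_filter_add_sum_filter_not N _ f).symm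
  have hsplit2 : ∑ u ∈ A', f u = ∑ u ∈ B, f u + ∑ u ∈ C, f u :=
    (Finset.sum_filter_add_sum_filter_not A' _ f).symm
  have hAmem : ∀ u ∈ A, u ∈ N ∧ 3 ≤ f u := fun u hu => Finset.mem_filter.mp hu
  have hdisj : (A : Set V).PairwiseDisjoint (fun u => N ∩ G.neighborFinset u) := by
    intro u hu u' hu' huu'
    simp only [Finset.coe_mem, Finset.mem_coe] at hu hu'
    obtain ⟨huN, hu3⟩ := hAmem u hu
    obtain ⟨hu'N, hu'3⟩ := hAmem u' hu'
    simp only [Function.onFun]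
    rw [Finset.disjoint_left]
    intro x hx hx'
    have h1 := key u huN hu3 x hx
    rw [Finset.mem_inter, SimpleGraph.mem_neighborFinset] at hx hx'
    have hsub : ({u, u'} : Finset V) ⊆ N ∩ G.neighborFinset x := by
      intro a ha
      rcases Finset.mem_insert.mp ha with rfl | ha
      · rw [Finset.mem_inter, SimpleGraph.mem_neighborFinset]; exact ⟨huN, hx.2.symm⟩
      · rw [Finset.mem_singleton] at ha; subst ha
        rw [Finset.mem_inter, SimpleGraph.mem_neighborFinset]; exact ⟨hu'N, hx'.2.symm⟩
    have hcard2 : ({u, u'} : Finset V).card = 2 := by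
      rw [Finset.card_insert_of_notMem (by simpa using huu'), Finset.card_singleton]
    have := Finset.card_le_card hsub
    simp only [hf] at h1
    omega
  have hbiU : ∑ u ∈ A, f u = (A.biUnion (fun u => N ∩ G.neighborFinset u)).card := by
    rw [Finset.card_biUnion (fun u hu u' hu' h => hdisj hu hu' h)]
  have hsubB : A.biUnion (fun u => N ∩ G.neighborFinset u) ⊆ B := by
    intro x hx
    obtain ⟨u, hu, hxu⟩ := Finset.mem_biUnion.mp hx
    obtain ⟨huN, hu3⟩ := hAmem u hu
    have h1 := key u huN hu3 x hxu
    have hxN : x ∈ N := (Finset.mem_inter.mp hxu).1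
    rw [hB, hA', Finset.mem_filter, Finset.mem_filter]
    exact ⟨⟨hxN, by omega⟩, h1⟩
  have hAle : ∑ u ∈ A, f u ≤ B.card := hbiU ▸ Finset.card_le_card hsubB
  have hBle : ∑ u ∈ B, f u = B.card := by
    rw [Finset.card_eq_sum_ones]
    exact Finset.sum_congr rfl (fun u hu => (Finset.mem_filter.mp hu).2)
  have hCle : ∑ u ∈ C, f u ≤ 2 * C.card := by
    rw [Finset.card_eq_sum_ones, Finset.mul_sum]
    refine Finset.sum_le_sum (fun u hu => ?_)
    have := (Finset.mem_filter.mp ((Finset.mem_filter.mp hu).1)).2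
    omega
  have hBC : B.card + C.card = A'.card := Finset.card_filter_add_card_filter_not _
  have hA'N : A'.card ≤ N.card := Finset.card_le_card (Finset.filter_subset _ _)
  have : ∑ u ∈ N, f u ≤ 2 * N.card := by
    calc ∑ u ∈ N, f u = ∑ u ∈ A, f u + (∑ u ∈ B, f u + ∑ u ∈ C, f u) := by
          rw [hsplit, hsplit2]
      _ ≤ B.card + (B.card + 2 * C.card) :=
          Nat.add_le_add hAle (Nat.add_le_add hBle.le hCle)
      _ = 2 * (B.card + C.card) := by ring
      _ = 2 * A'.card := by rw [hBC]
      _ ≤ 2 * N.card := by omega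
  simpa only [hf] using this

theorem stmt_17 {V : Type*} [Fintype V] (G : SimpleGraph V) [DecidableRel G.Adj]
    (t : ℕ) (ht : 2 ≤ t) (d : ℝ) (hd : 6 ≤ d)
    (hC5 : ¬ hasCycleLength G 5) (hind : ¬ hasInducedKst G 2 t)
    (hmin : ∀ v, d / 2 ≤ (G.degree v : ℝ))
    (v : V) (hv : 6 * d < (G.degree v : ℝ)) :
    2 * d ^ 2 / ((max 3 t - 1 : ℕ) : ℝ) < (Fintype.card V : ℝ) := by
  classical
  set N := G.neighborFinset v with hN
  set T := max 3 t - 1 with hT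
  have hT2 : 2 ≤ T := by
    have : 3 ≤ max 3 t := le_max_left 3 t
    omega
  set D := Finset.univ.filter (fun w => w ∉ N ∧ w ≠ v ∧ ∃ u ∈ N, G.Adj u w) with hD
  have hNmem : ∀ u, u ∈ N ↔ G.Adj v u := fun u => SimpleGraph.mem_neighborFinset G v u
  -- P4-freeness of N
  have hP4 : ∀ a ∈ N, ∀ b ∈ N, ∀ c ∈ N, ∀ e ∈ N,
      G.Adj a b → G.Adj b c → G.Adj c e → a ≠ c → b ≠ e → a ≠ e → False := by
    intro a ha b hb c hc e he hab hbc hce hac hbe hae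
    rw [hNmem] at ha hb hc he
    exact hC5 (c5_of G ha hab hbc hce he.symm hb.ne hc.ne hac hae hbe)
  have hsumf : ∑ u ∈ N, (N ∩ G.neighborFinset u).card ≤ 2 * N.card := p4free_sum G N hP4
  -- per-vertex degree decomposition
  have hdeg : ∀ u ∈ N, G.degree u ≤ 1 + (N ∩ G.neighborFinset u).card + (D ∩ G.neighborFinset u).card := by
    intro u hu
    have hsub : G.neighborFinset u ⊆ insert v ((N ∩ G.neighborFinset u) ∪ (D ∩ G.neighborFinset u)) := by
      intro w hw
      by_cases hwv : w = v
      · exact Finset.mem_insert.mpr (Or.inl hwv)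
      refine Finset.mem_insert.mpr (Or.inr (Finset.mem_union.mpr ?_))
      by_cases hwN : w ∈ N
      · exact Or.inl (Finset.mem_inter.mpr ⟨hwN, hw⟩)
      · refine Or.inr (Finset.mem_inter.mpr ⟨?_, hw⟩)
        rw [hD, Finset.mem_filter]
        exact ⟨Finset.mem_univ w, hwN, hwv, u, hu, (SimpleGraph.mem_neighborFinset G u w).mp hw⟩
    calc G.degree u = (G.neighborFinset u).card := (G.card_neighborFinset_eq_degree u).symm
      _ ≤ (insert v ((N ∩ G.neighborFinset u) ∪ (D ∩ G.neighborFinset u))).card :=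
          Finset.card_le_card hsub
      _ ≤ 1 + ((N ∩ G.neighborFinset u) ∪ (D ∩ G.neighborFinset u)).card := by
          rw [Nat.add_comm]; exact Finset.card_insert_le _ _
      _ ≤ 1 + ((N ∩ G.neighborFinset u).card + (D ∩ G.neighborFinset u).card) :=
          Nat.add_le_add_left (Finset.card_union_le _ _) 1
      _ = _ := by ring
  -- double counting
  have hdc : ∑ u ∈ N, (D ∩ G.neighborFinset u).card = ∑ w ∈ D, (N ∩ G.neighborFinset w).card := by
    have e1 : ∀ (s : Finset V) (u : V), (s ∩ G.neighborFinset u).card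
        = ∑ w ∈ s, if G.Adj u w then 1 else 0 := by
      intro s u
      rw [← Finset.card_filter]
      congr 1
      ext w
      simp [SimpleGraph.mem_neighborFinset]
    simp only [e1]
    rw [Finset.sum_comm]
    refine Finset.sum_congr rfl fun w _ => Finset.sum_congr rfl fun u _ => if_congr ?_ rfl rfl
    exact G.adj_comm u w
  have hDbound : ∀ w ∈ D, (N ∩ G.neighborFinset w).card ≤ T := by
    intro w hw
    rw [hD, Finset.mem_filter] at hw
    obtain ⟨-, hwN, hwv, -⟩ := hw
    have hnadj : ¬ G.Adj v w := fun h => hwN ((hNmem w).mpr h)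
    exact common_le G t ht hC5 hind (Ne.symm hwv) hnadj
  have hsumg : ∑ u ∈ N, (D ∩ G.neighborFinset u).card ≤ T * D.card := by
    rw [hdc]
    calc ∑ w ∈ D, (N ∩ G.neighborFinset w).card ≤ ∑ w ∈ D, T :=
          Finset.sum_le_sum hDbound
      _ = T * D.card := by rw [Finset.sum_const, smul_eq_mul, mul_comm]
  -- total degree sum bound (ℕ)
  have hdegsum : ∑ u ∈ N, G.degree u ≤ 3 * N.card + T * D.card := by
    calc ∑ u ∈ N, G.degree u
        ≤ ∑ u ∈ N, (1 + (N ∩ G.neighborFinset u).card + (D ∩ G.neighborFinset u).card) :=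
          Finset.sum_le_sum hdeg
      _ = N.card + (∑ u ∈ N, (N ∩ G.neighborFinset u).card)
            + ∑ u ∈ N, (D ∩ G.neighborFinset u).card := by
          rw [Finset.sum_add_distrib, Finset.sum_add_distrib, Finset.sum_const, smul_eq_mul, mul_one]
      _ ≤ N.card + 2 * N.card + T * D.card := by
          exact Nat.add_le_add (Nat.add_le_add_left hsumf _) hsumg
      _ = 3 * N.card + T * D.card := by ring
  -- min degree bound (ℝ)
  have hlow : (N.card : ℝ) * (d / 2) ≤ (∑ u ∈ N, G.degree u : ℕ) := by
    push_cast
    calc (N.card : ℝ) * (d / 2) = ∑ _u ∈ N, (d / 2) := by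
          rw [Finset.sum_const, nsmul_eq_mul]
      _ ≤ ∑ u ∈ N, (G.degree u : ℝ) := Finset.sum_le_sum (fun u _ => hmin u)
  -- count of vertices
  have hcount : 1 + N.card + D.card ≤ Fintype.card V := by
    have hvND : v ∉ N ∪ D := by
      rw [Finset.mem_union]
      rintro (h | h)
      · exact G.irrefl ((hNmem v).mp h)
      · rw [hD, Finset.mem_filter] at h; exact h.2.2.1 rfl
    have hNDdisj : Disjoint N D := by
      rw [Finset.disjoint_left]
      intro w hwN hwD
      rw [hD, Finset.mem_filter] at hwD
      exact hwD.2.1 hwN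
    calc 1 + N.card + D.card = (insert v (N ∪ D)).card := by
          rw [Finset.card_insert_of_notMem hvND, Finset.card_union_of_disjoint hNDdisj]; ring
      _ ≤ Fintype.card V := Finset.card_le_univ _
  -- assemble in ℝ
  have hNdeg : N.card = G.degree v := G.card_neighborFinset_eq_degree v
  set M : ℝ := (N.card : ℝ) with hM
  have hM6 : 6 * d < M := by rw [hM, hNdeg]; exact hv
  have hT2' : (2 : ℝ) ≤ (T : ℝ) := by exact_mod_cast hT2
  have hT0 : (0 : ℝ) < (T : ℝ) := by linarith
  have hup : (∑ u ∈ N, G.degree u : ℕ) ≤ 3 * M + (T : ℝ) * D.card := by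
    rw [hM]
    exact_mod_cast hdegsum
  have hn : 1 + M + (D.card : ℝ) ≤ (Fintype.card V : ℝ) := by
    rw [hM]
    exact_mod_cast hcount
  rw [div_lt_iff₀ hT0]
  have hDc0 : (0 : ℝ) ≤ (D.card : ℝ) := Nat.cast_nonneg _
  nlinarith [mul_le_mul_of_nonneg_left hn (le_of_lt hT0),
    mul_nonneg (by linarith : (0:ℝ) ≤ (T:ℝ) - 2) (by linarith : (0:ℝ) ≤ M),
    mul_pos (by linarith : (0:ℝ) < M - 6*d) (by linarith : (0:ℝ) < d/2 - 1),
    mul_nonneg (by linarith : (0:ℝ) ≤ d - 6) (by linarith : (0:ℝ) ≤ d)]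
end
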